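/- arXiv:1809.05013 — 6 statements merged into one kernel-verified Lean document; each statement's English description precedes it below -/
import Mathlib

section
/- The Relay Reversal rule preserves weak connectivity: if G is a weakly connected relay graph in which a process u owns relays r and s with r ≠ s and r has no incoming relay connections, then the graph G' obtained by adding an implicit edge (r, s) and then deleting the edge (u, r) (while keeping vertex r until its buffer empties, with r still connected to its outgoing target) is weakly connected. -/
/-- Weak connectivity of a directed graph given by an edge relation. -/
def wcP {V : Type*} (E : V → V → Prop) : Prop :=
  ∀ a b : V, Relation.ReflTransGen (fun x y => E x y ∨ E y x) a b

/-- Relay Reversal preserves weak connectivity: if process `u` owns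
relays `r ≠ s`, `r` has no incoming connections (its only incoming edge is the
ownership edge from `u`), then adding the implicit edge `(r,s)` and deleting the
edge `(u,r)` (keeping `r` with its outgoing connection) yields a weakly connected
graph. -/
theorem relayReversal_preserves_weak_connectivity {V : Type*}
    (E : V → V → Prop) (u r s t : V)
    (hur : E u r) (hus : E u s) (hrs : r ≠ s) (hrt : E r t)
    (hnoin : ∀ x, E x r → x = u)
    (hwc : wcP E) :
    wcP (fun x y => (E x y ∧ ¬(x = u ∧ y = r)) ∨ (x = r ∧ y = s)) := by
  intro a b
  set E' : V → V → Prop := fun x y => (E x y ∧ ¬(x = u ∧ y = r)) ∨ (x = r ∧ y = s) with hE'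
  have key : ∀ x y : V, E x y → Relation.ReflTransGen (fun p q => E' p q ∨ E' q p) x y := by
    intro x y hxy
    by_cases h : x = u ∧ y = r
    · -- replace u→r by u→s then s—r (new edge r→s reversed)
      obtain ⟨hx, hy⟩ := h
      subst hx; subst hy
      have h1 : E' x s := Or.inl ⟨hus, fun h => hrs h.2.symm⟩
      have h2 : E' y s := Or.inr ⟨rfl, rfl⟩
      exact Relation.ReflTransGen.tail (Relation.ReflTransGen.single (Or.inl h1))
        (Or.inr h2)
    · exact Relation.ReflTransGen.single (Or.inl (Or.inl ⟨hxy, h⟩))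
  have step : ∀ x y : V, (E x y ∨ E y x) →
      Relation.ReflTransGen (fun p q => E' p q ∨ E' q p) x y := by
    intro x y h
    rcases h with h | h
    · exact key x y h
    · exact (@Relation.ReflTransGen.symmetric _ _ ⟨fun _ _ h => Or.symm h⟩).symm _ _ (key y x h)
  have := hwc a b
  induction this with
  | refl => exact Relation.ReflTransGen.refl
  | tail _ h ih => exact ih.trans (step _ _ h)
end

section
/- For any simple relay graph G_R, there is a one-to-one correspondence (up to isomorphism) between simple relay graphs and their corresponding process graphs: given a process multigraph G_P, there is a unique (up to isomorphism) simple relay graph G_R with CPG(G_R) = G_P. -/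
/-- A relay graph: a finite type of relays, each owned by a process and having at
most one outgoing connection to another relay (`none` means the relay is a sink). -/
structure RG (P : Type) where
  R : Type
  fintR : Fintype R
  owner : R → P
  out : R → Option R

attribute [instance] RG.fintR

/-- The corresponding process (multi)graph `CPG(G)`: one edge `(owner r, owner s)`
for every relay-to-relay connection `out r = some s`. -/
def cpg {P : Type} (G : RG P) : Multiset (P × P) :=
  (Finset.univ : Finset G.R).val.filterMap fun r =>
    (G.out r).map fun s => (G.owner r, G.owner s)

/-- A simple relay graph: all relays are direct (non-sink relays point to sinks)
and every sink relay has exactly one incoming connection. -/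
def isSimple {P : Type} (G : RG P) : Prop :=
  (∀ r s : G.R, G.out r = some s → G.out s = none) ∧
  (∀ s : G.R, G.out s = none → ∃! r : G.R, G.out r = some s)

/-- `s` is the sink relay reached from `r` by following outgoing connections. -/
def isSinkOf {P : Type} (G : RG P) (r s : G.R) : Prop :=
  Relation.ReflTransGen (fun a b => G.out a = some b) r s ∧ G.out s = none

/-- Isomorphism of relay graphs (over the same processes). -/
def rgIso {P : Type} (G G' : RG P) : Prop :=
  ∃ e : G.R ≃ G'.R, ∀ x : G.R,
    G'.owner (e x) = G.owner x ∧ G'.out (e x) = Option.map (fun y => e y) (G.out x)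

/-- The relays removed when relay `r` (with sink relay `t`) is deleted by Relay
Reversal: `r` itself, together with `t` in case `r` was its only incoming
connection (the deliberate application then deletes the orphaned sink). -/
def revRemoved {P : Type} (G : RG P) (r t : G.R) : Set G.R :=
  {x | x = r ∨ (x = t ∧ ∀ y, y ≠ r → G.out y ≠ some t)}

/-- Relay Introduction (net effect): a process `u` owning relays `r` and `s` sends
a reference of `s` via `r`; the sink process of `r` (owner of the sink relay `t`)
obtains a new relay `s'` with outgoing connection to `s`. All old relays are kept. -/
def relayIntro {P : Type} (G G' : RG P) : Prop :=
  ∃ (u : P) (r s t : G.R) (s' : G'.R) (F : G.R → G'.R),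
    G.owner r = u ∧ G.owner s = u ∧ isSinkOf G r t ∧
    Function.Injective F ∧
    (∀ z : G'.R, z = s' ∨ ∃ x : G.R, F x = z) ∧
    (∀ x : G.R, F x ≠ s') ∧
    (∀ x : G.R, G'.owner (F x) = G.owner x ∧
      G'.out (F x) = Option.map F (G.out x)) ∧
    G'.owner s' = G.owner t ∧ G'.out s' = some (F s)

/-- Relay Reversal (net effect): a process `u` owning relays `r ≠ s`, where `r` has
no incoming connection, sends a reference via `r` and subsequently deletes `r`.
Either an existing relay `s` of `u` is sent (first disjunct), or `u` creates a
fresh sink relay `q` and sends it (second disjunct); in both cases the sink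
process of `r` obtains a new relay pointing to the sent relay, and `r` (together
with its sink relay if thereby orphaned) is deleted. -/
def relayReversal {P : Type} (G G' : RG P) : Prop :=
  ∃ (u : P) (r t : G.R), G.owner r = u ∧ (∀ x : G.R, G.out x ≠ some r) ∧
    isSinkOf G r t ∧
    ((∃ (s : G.R) (s' : G'.R) (F : G.R → G'.R),
        s ≠ r ∧ G.owner s = u ∧ s ∉ revRemoved G r t ∧
        (∀ x y : G.R, x ∉ revRemoved G r t → y ∉ revRemoved G r t →
          (F x = F y ↔ x = y)) ∧
        (∀ z : G'.R, z = s' ∨ ∃ x : G.R, x ∉ revRemoved G r t ∧ F x = z) ∧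
        (∀ x : G.R, x ∉ revRemoved G r t → F x ≠ s') ∧
        (∀ x : G.R, x ∉ revRemoved G r t → G'.owner (F x) = G.owner x ∧
          G'.out (F x) = Option.map F (G.out x)) ∧
        G'.owner s' = G.owner t ∧ G'.out s' = some (F s)) ∨
     (∃ (q q' : G'.R) (F : G.R → G'.R),
        q ≠ q' ∧
        (∀ x y : G.R, x ∉ revRemoved G r t → y ∉ revRemoved G r t →
          (F x = F y ↔ x = y)) ∧
        (∀ z : G'.R, z = q ∨ z = q' ∨ ∃ x : G.R, x ∉ revRemoved G r t ∧ F x = z) ∧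
        (∀ x : G.R, x ∉ revRemoved G r t → F x ≠ q ∧ F x ≠ q') ∧
        (∀ x : G.R, x ∉ revRemoved G r t → G'.owner (F x) = G.owner x ∧
          G'.out (F x) = Option.map F (G.out x)) ∧
        G'.owner q = u ∧ G'.out q = none ∧
        G'.owner q' = G.owner t ∧ G'.out q' = some q))

/-- Relay Fusion (net effect): two relays `r ≠ r'` of the same process with the
same outgoing target are merged into one. -/
def relayFusion {P : Type} (G G' : RG P) : Prop :=
  ∃ (r r' : G.R) (_ : r ≠ r') (f : G.R → G'.R),
    G.owner r = G.owner r' ∧ G.out r = G.out r' ∧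
    Function.Surjective f ∧
    (∀ x y : G.R, f x = f y ↔ (x = y ∨ ({x, y} : Set G.R) = {r, r'})) ∧
    ∀ x : G.R, G'.owner (f x) = G.owner x ∧ G'.out (f x) = Option.map f (G.out x)

/-- Edges of the relay graph seen as a directed graph on processes and relays:
ownership edges, relay-to-relay edges, and sink-relay-to-process edges. -/
def rgEdge {P : Type} (G : RG P) : (P ⊕ G.R) → (P ⊕ G.R) → Prop := fun a b =>
  (∃ r : G.R, a = Sum.inl (G.owner r) ∧ b = Sum.inr r) ∨
  (∃ r s : G.R, a = Sum.inr r ∧ b = Sum.inr s ∧ G.out r = some s) ∨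
  (∃ r : G.R, a = Sum.inr r ∧ G.out r = none ∧ b = Sum.inl (G.owner r))

/-- Weak connectivity of a relay graph. -/
def rgWC {P : Type} (G : RG P) : Prop :=
  ∀ a b : P ⊕ G.R,
    Relation.ReflTransGen (fun x y => rgEdge G x y ∨ rgEdge G y x) a b


namespace SRGAux

lemma exists_equiv_of_map_eq {α β γ : Type} [Fintype α] [Fintype β] (f : α → γ) (g : β → γ)
    (h : (Finset.univ : Finset α).val.map f = (Finset.univ : Finset β).val.map g) :
    ∃ e : α ≃ β, ∀ a, g (e a) = f a := by
  classical
  have hcard : ∀ c : γ, Fintype.card {a // f a = c} = Fintype.card {b // g b = c} := by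
    intro c
    have h2 := congrArg (Multiset.count c) h
    rw [Multiset.count_map, Multiset.count_map] at h2
    rw [Fintype.card_subtype, Fintype.card_subtype]
    simpa [Finset.card, Finset.filter_val, eq_comm] using h2
  refine ⟨(Equiv.sigmaFiberEquiv f).symm.trans
    ((Equiv.sigmaCongrRight fun c => Fintype.equivOfCardEq (hcard c)).trans
      (Equiv.sigmaFiberEquiv g)), ?_⟩
  intro a
  simp only [Equiv.trans_apply, Equiv.sigmaFiberEquiv, Equiv.sigmaCongrRight,
    Equiv.coe_fn_symm_mk, Equiv.coe_fn_mk]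
  exact (Fintype.equivOfCardEq (hcard (f a)) ⟨a, rfl⟩).2

lemma mfilterMap_add {α β : Type*} (f : α → Option β) (s t : Multiset α) :
    Multiset.filterMap f (s + t) = Multiset.filterMap f s + Multiset.filterMap f t :=
  Quotient.inductionOn₂ s t fun l₁ l₂ => congr_arg _ (List.filterMap_append (l := l₁) (l' := l₂) (f := f))

lemma mfilterMap_none {α β : Type*} (f : α → Option β) (hf : ∀ a, f a = none)
    (s : Multiset α) : Multiset.filterMap f s = 0 := by
  induction s using Multiset.induction with
  | empty => simp
  | cons a s ih => rw [Multiset.filterMap_cons_none a s (hf a), ih]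

lemma cpg_eq_map {P : Type} (G : RG P) :
    cpg G = (Finset.univ : Finset {r : G.R // (G.out r).isSome}).val.map
      (fun x => (G.owner x.1, G.owner ((G.out x.1).get x.2))) := by
  classical
  have he : ((Finset.univ : Finset ({r : G.R // (G.out r).isSome} ⊕
      {r : G.R // ¬ (G.out r).isSome})).val.map
      (Equiv.sumCompl (fun r => (G.out r).isSome))) = (Finset.univ : Finset G.R).val :=
    Multiset.map_univ_val_equiv _
  rw [cpg, ← he, Multiset.filterMap_map, ← Finset.univ_disjSum_univ, Finset.val_disjSum]
  have hd : (Finset.univ : Finset {r : G.R // (G.out r).isSome}).val.disjSum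
      (Finset.univ : Finset {r : G.R // ¬ (G.out r).isSome}).val
      = Multiset.map Sum.inl (Finset.univ : Finset {r : G.R // (G.out r).isSome}).val
        + Multiset.map Sum.inr (Finset.univ : Finset {r : G.R // ¬ (G.out r).isSome}).val := rfl
  rw [hd, mfilterMap_add, Multiset.filterMap_map, Multiset.filterMap_map]
  have h1 : (((fun r => (G.out r).map fun s => (G.owner r, G.owner s)) ∘
        (Equiv.sumCompl (fun r => (G.out r).isSome))) ∘ Sum.inl)
      = some ∘ (fun x : {r : G.R // (G.out r).isSome} =>
          (G.owner x.1, G.owner ((G.out x.1).get x.2))) := by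
    funext x
    obtain ⟨s, hs⟩ := Option.isSome_iff_exists.1 x.2
    simp [Function.comp, Equiv.sumCompl_apply_inl, hs]
  rw [h1, Multiset.filterMap_eq_map]
  rw [mfilterMap_none _ (fun x => ?_), add_zero]
  simp [Function.comp, Option.not_isSome_iff_eq_none.1 x.2]

def sinkMap {P : Type} (G : RG P) (hG : ∀ r s : G.R, G.out r = some s → G.out s = none) :
    {r : G.R // (G.out r).isSome} → {r : G.R // ¬ (G.out r).isSome} :=
  fun x => ⟨(G.out x.1).get x.2, by
    rw [hG x.1 _ (Option.some_get x.2).symm]; simp⟩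

lemma sinkMap_bij {P : Type} (G : RG P) (hG : isSimple G) :
    Function.Bijective (sinkMap G hG.1) := by
  constructor
  · intro a b hab
    have ha : G.out a.1 = some (sinkMap G hG.1 a).1 := (Option.some_get a.2).symm
    have hb : G.out b.1 = some (sinkMap G hG.1 b).1 := (Option.some_get b.2).symm
    rw [hab] at ha
    obtain ⟨r, hr, hu⟩ := hG.2 _ (hG.1 b.1 _ hb)
    exact Subtype.ext ((hu a.1 ha).trans (hu b.1 hb).symm)
  · rintro ⟨s, hs⟩
    have hs' : G.out s = none := Option.not_isSome_iff_eq_none.1 hs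
    obtain ⟨r, hr, -⟩ := hG.2 s hs'
    refine ⟨⟨r, by rw [hr]; rfl⟩, Subtype.ext ?_⟩
    simp [sinkMap, hr]

end SRGAux

/-- One-to-one correspondence (up to isomorphism) between simple relay
graphs and process multigraphs: every process multigraph `GP` is `CPG` of some
simple relay graph, and any two simple relay graphs with the same `CPG` are
isomorphic. -/
theorem simple_relay_graph_process_graph_correspondence {P : Type}
    (GP : Multiset (P × P)) :
    (∃ G : RG P, isSimple G ∧ cpg G = GP) ∧
    (∀ G1 G2 : RG P, isSimple G1 → isSimple G2 →
      cpg G1 = GP → cpg G2 = GP → rgIso G1 G2) := by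
  classical
  constructor
  · -- existence
    set l := GP.toList with hl
    refine ⟨⟨Fin l.length ⊕ Fin l.length, inferInstance,
      Sum.elim (fun i => (l.get i).1) (fun i => (l.get i).2),
      Sum.elim (fun i => some (Sum.inr i)) (fun _ => none)⟩, ⟨?_, ?_⟩, ?_⟩
    · rintro (i|i) s h
      · dsimp only at h ⊢
        rw [Sum.elim_inl, Option.some_inj] at h
        subst h; rfl
      · dsimp only at h; simp at h
    · rintro (i|i) h
      · dsimp only at h; simp at h
      · refine ⟨Sum.inl i, rfl, ?_⟩
        rintro (j|j) hj
        · dsimp only at hj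
          rw [Sum.elim_inl, Option.some_inj] at hj
          obtain rfl : j = i := Sum.inr.inj hj
          rfl
        · dsimp only at hj; simp at hj
    · -- cpg of this graph is GP
      show Multiset.filterMap (fun r : Fin l.length ⊕ Fin l.length =>
        ((Sum.elim (fun i => some (Sum.inr i)) (fun _ => none) :
            Fin l.length ⊕ Fin l.length → Option (Fin l.length ⊕ Fin l.length)) r).map
          (fun s => (Sum.elim (fun i => (l.get i).1) (fun i => (l.get i).2) r,
            Sum.elim (fun i => (l.get i).1) (fun i => (l.get i).2) s))) Finset.univ.val = GP
      have hu : (Finset.univ : Finset (Fin l.length ⊕ Fin l.length)).val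
          = Multiset.map Sum.inl (Finset.univ : Finset (Fin l.length)).val
            + Multiset.map Sum.inr (Finset.univ : Finset (Fin l.length)).val := by
        rw [← Finset.univ_disjSum_univ, Finset.val_disjSum]; rfl
      rw [hu, SRGAux.mfilterMap_add, Multiset.filterMap_map, Multiset.filterMap_map]
      have h1 : ((fun r : Fin l.length ⊕ Fin l.length =>
          (Sum.elim (fun i => some (Sum.inr i)) (fun _ => none) r).map
            fun s => (Sum.elim (fun i => (l.get i).1) (fun i => (l.get i).2) r,
              Sum.elim (fun i => (l.get i).1) (fun i => (l.get i).2) s)) ∘ Sum.inl)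
          = some ∘ l.get := by
        funext i
        simp [Function.comp]
      have h2 : ((fun r : Fin l.length ⊕ Fin l.length =>
          (Sum.elim (fun i => some (Sum.inr i)) (fun _ => none) r).map
            fun s => (Sum.elim (fun i => (l.get i).1) (fun i => (l.get i).2) r,
              Sum.elim (fun i => (l.get i).1) (fun i => (l.get i).2) s)) ∘ Sum.inr)
          = fun _ => (none : Option (P × P)) := by
        funext i; simp [Function.comp]
      rw [h1, h2, Multiset.filterMap_eq_map, SRGAux.mfilterMap_none _ (fun i => rfl), add_zero,
        Fin.univ_val_map, List.ofFn_get]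
      exact GP.coe_toList
  · intro G1 G2 h1 h2 hc1 hc2
    have hcc := (SRGAux.cpg_eq_map G1).symm.trans
      ((hc1.trans hc2.symm).trans (SRGAux.cpg_eq_map G2))
    obtain ⟨e, he⟩ := SRGAux.exists_equiv_of_map_eq _ _ hcc
    let σ1 := Equiv.ofBijective _ (SRGAux.sinkMap_bij G1 h1)
    let σ2 := Equiv.ofBijective _ (SRGAux.sinkMap_bij G2 h2)
    let eS := σ1.symm.trans (e.trans σ2)
    let E : G1.R ≃ G2.R := (Equiv.sumCompl (fun r => (G1.out r).isSome)).symm.trans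
      ((Equiv.sumCongr e eS).trans (Equiv.sumCompl (fun r => (G2.out r).isSome)))
    refine ⟨E, fun x => ?_⟩
    by_cases hx : (G1.out x).isSome
    · have hEx : E x = (e ⟨x, hx⟩).1 := by
        simp only [E, Equiv.trans_apply, Equiv.sumCongr_apply]
        rw [Equiv.sumCompl_symm_apply_of_pos (p := fun r => (G1.out r).isSome = true) hx]
        rfl
      set y := e ⟨x, hx⟩ with hy
      have hfst : G2.owner y.1 = G1.owner x := congrArg Prod.fst (he ⟨x, hx⟩)
      have hsnd : G2.owner ((G2.out y.1).get y.2) = G1.owner ((G1.out x).get hx) :=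
        congrArg Prod.snd (he ⟨x, hx⟩)
      refine ⟨hEx ▸ hfst, ?_⟩
      -- the sink of x
      set s := (G1.out x).get hx with hs
      have hxs : G1.out x = some s := (Option.some_get hx).symm
      have hssink : ¬ (G1.out s).isSome := by
        rw [h1.1 x s hxs]; simp
      have hEs : E s = (eS ⟨s, hssink⟩).1 := by
        simp only [E, Equiv.trans_apply, Equiv.sumCongr_apply]
        rw [Equiv.sumCompl_symm_apply_of_neg (p := fun r => (G1.out r).isSome = true) hssink]
        rfl
      have hσ1 : σ1 ⟨x, hx⟩ = ⟨s, hssink⟩ := Subtype.ext rfl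
      have hES : E s = ((SRGAux.sinkMap G2 h2.1) y).1 := by
        rw [hEs]
        show ((σ2 (e (σ1.symm ⟨s, hssink⟩)))).1 = _
        rw [← hσ1, Equiv.symm_apply_apply, ← hy]
        rfl
      rw [hEx, hxs]
      show G2.out y.1 = some (E s)
      rw [hES]
      exact (Option.some_get y.2).symm
    · have hx' : G1.out x = none := Option.not_isSome_iff_eq_none.1 hx
      have hEx : E x = (eS ⟨x, hx⟩).1 := by
        simp only [E, Equiv.trans_apply, Equiv.sumCongr_apply]
        rw [Equiv.sumCompl_symm_apply_of_neg (p := fun r => (G1.out r).isSome = true) hx]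
        rfl
      set y := e (σ1.symm ⟨x, hx⟩) with hy
      have hEx2 : E x = ((SRGAux.sinkMap G2 h2.1) y).1 := by rw [hEx]; rfl
      have hyout : G2.out y.1 = some (((SRGAux.sinkMap G2 h2.1) y).1) :=
        (Option.some_get y.2).symm
      constructor
      · -- owner
        have hsnd : G2.owner ((G2.out y.1).get y.2)
            = G1.owner ((G1.out (σ1.symm ⟨x, hx⟩).1).get (σ1.symm ⟨x, hx⟩).2) :=
          congrArg Prod.snd (he (σ1.symm ⟨x, hx⟩))
        have hback : ((SRGAux.sinkMap G1 h1.1) (σ1.symm ⟨x, hx⟩)).1 = x :=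
          congrArg Subtype.val (σ1.apply_symm_apply ⟨x, hx⟩)
        rw [hEx2]
        exact hsnd.trans (congrArg G1.owner hback)
      · rw [hx', hEx2]
        show G2.out _ = none
        exact h2.1 y.1 _ hyout
end

section
/- The relay rules Relay Introduction and Relay Reversal together emulate the process rule Introduction: for every simple relay graph G_R and every application of Introduction to CPG(G_R) producing process graph G_P', there is a simple relay graph G_R' with CPG(G_R') = G_P' obtainable from G_R by applying Relay Introduction once followed by Relay Reversal once. -/
lemma univ_option_val (α : Type) [Fintype α] [inst : Fintype (Option α)] :
    (@Finset.univ (Option α) inst).val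
      = none ::ₘ (Finset.univ : Finset α).val.map some := by
  have : inst = instFintypeOption := Subsingleton.elim _ _
  subst this
  rfl

lemma mem_cpg {P : Type} (G : RG P) (p : P × P) :
    p ∈ cpg G ↔ ∃ r s : G.R, G.out r = some s ∧ G.owner r = p.1 ∧ G.owner s = p.2 := by
  simp only [cpg, Multiset.mem_filterMap, Option.map_eq_some_iff]
  constructor
  · rintro ⟨r, -, s, hs, h⟩
    exact ⟨r, s, hs, by rw [← h], by rw [← h]⟩
  · rintro ⟨r, s, hs, h1, h2⟩
    exact ⟨r, Finset.mem_univ r, s, hs, by simp [h1, h2]⟩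

/-- The graph after Relay Introduction: a new relay (named `none`) owned by
`G.owner d` pointing to `a`. -/
def introG {P : Type} (G : RG P) (a d : G.R) : RG P where
  R := Option G.R
  fintR := inferInstance
  owner := fun x => x.elim (G.owner d) G.owner
  out := fun x => x.elim (some (some a)) fun y => (G.out y).map some

/-- The graph after the subsequent Relay Reversal: old relays plus a fresh sink
relay `none` owned by `G.owner d` and a fresh relay `some none` owned by
`G.owner b` pointing to it. -/
def revG {P : Type} (G : RG P) (b d : G.R) : RG P where
  R := Option (Option G.R)
  fintR := inferInstance
  owner := fun x => x.elim (G.owner d) fun y => y.elim (G.owner b) G.owner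
  out := fun x => x.elim none fun y =>
    y.elim (some none) fun z => (G.out z).map (some ∘ some)

lemma filterMap_univ_none {α β : Type} [Fintype α] [inst : Fintype (Option α)]
    (f : Option α → Option β) (h : f none = none) :
    Multiset.filterMap f (@Finset.univ (Option α) inst).val
      = Multiset.filterMap (f ∘ some) (Finset.univ : Finset α).val := by
  rw [univ_option_val, Multiset.filterMap_cons_none _ _ h, Multiset.filterMap_map]

lemma filterMap_univ_some {α β : Type} [Fintype α] [inst : Fintype (Option α)]
    (f : Option α → Option β) (p : β) (h : f none = some p) :
    Multiset.filterMap f (@Finset.univ (Option α) inst).val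
      = p ::ₘ Multiset.filterMap (f ∘ some) (Finset.univ : Finset α).val := by
  rw [univ_option_val, Multiset.filterMap_cons_some _ _ _ h, Multiset.filterMap_map]

lemma cpg_revG {P : Type} (G : RG P) (b d : G.R) :
    cpg (revG G b d) = (G.owner b, G.owner d) ::ₘ cpg G := by
  show Multiset.filterMap
      (fun r : Option (Option G.R) => Option.map
        (fun s => ((revG G b d).owner r, (revG G b d).owner s)) ((revG G b d).out r))
      (Finset.univ : Finset (Option (Option G.R))).val = _
  rw [filterMap_univ_none _ rfl, filterMap_univ_some _ (G.owner b, G.owner d) rfl]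
  congr 1
  show Multiset.filterMap _ _ = Multiset.filterMap _ _
  congr 1
  funext z
  show ((G.out z).map (some ∘ some)).map _ = _
  refine (Option.map_map _ _ _).trans ?_
  rfl

/-- Relay Introduction and Relay Reversal emulate the process rule
Introduction: for every simple relay graph `G` and every application of
Introduction to `CPG(G)` (a process `u` with edges to `v` and `w` adds an edge
`(v,w)`), a simple relay graph whose `CPG` is the result is obtained from `G` by
one Relay Introduction followed by one Relay Reversal. -/
theorem relay_rules_emulate_Introduction {P : Type} (G : RG P)
    (hG : isSimple G) (E' : Multiset (P × P))
    (hstep : ∃ u v w : P, (u, v) ∈ cpg G ∧ (u, w) ∈ cpg G ∧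
      E' = (v, w) ::ₘ cpg G) :
    ∃ G1 G2 : RG P, relayIntro G G1 ∧ relayReversal G1 G2 ∧
      isSimple G2 ∧ cpg G2 = E' := by
  obtain ⟨u, v, w, huv, huw, hE⟩ := hstep
  rw [mem_cpg] at huv huw
  obtain ⟨a, b, hab, hoa, hob⟩ := huv
  obtain ⟨c, d, hcd, hoc, hod⟩ := huw
  have hbn : G.out b = none := hG.1 a b hab
  have hdn : G.out d = none := hG.1 c d hcd
  refine ⟨introG G a d, revG G b d, ?_, ?_, ?_, ?_⟩
  · -- relayIntro
    refine ⟨u, c, a, d, none, some, hoc, hoa,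
      ⟨Relation.ReflTransGen.single hcd, hdn⟩,
      fun x y h => Option.some_injective _ h, ?_, fun x => Option.some_ne_none x, ?_, rfl, rfl⟩
    · intro z
      cases z with
      | none => exact Or.inl rfl
      | some x => exact Or.inr ⟨x, rfl⟩
    · intro x
      exact ⟨rfl, rfl⟩
  · -- relayReversal
    have hnoinc : ∀ x : (introG G a d).R, (introG G a d).out x ≠ some none := by
      rintro (_ | y) h
      · exact Option.noConfusion rfl (heq_of_eq (Option.some.inj h))
      · have : ∃ y', G.out y = some y' ∧ some y' = (none : Option G.R) :=
          Option.map_eq_some_iff.1 h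
        obtain ⟨y', -, hy'⟩ := this
        exact Option.noConfusion rfl (heq_of_eq hy')
    have houta : (introG G a d).out (some a) = some (some b) := by
      show (G.out a).map some = _
      rw [hab]; rfl
    have hnr : ∀ y : G.R,
        (some y : (introG G a d).R) ∉ revRemoved (introG G a d) none (some b) := by
      intro y h
      rcases h with h | ⟨h1, h2⟩
      · exact Option.noConfusion rfl (heq_of_eq h)
      · exact h2 (some a) (fun hh => Option.noConfusion rfl (heq_of_eq hh)) houta
    refine ⟨G.owner d, none, some b, rfl, hnoinc,
      ⟨Relation.ReflTransGen.head rfl (Relation.ReflTransGen.single houta),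
        by show (G.out b).map some = none; rw [hbn]; rfl⟩,
      Or.inr ⟨none, some none, some, fun h => Option.noConfusion rfl (heq_of_eq h),
        fun x y _ _ => Option.some_inj, ?_, ?_, ?_, rfl, rfl, rfl, rfl⟩⟩
    · rintro (_ | _ | z)
      · exact Or.inl rfl
      · exact Or.inr (Or.inl rfl)
      · exact Or.inr (Or.inr ⟨some z, hnr z, rfl⟩)
    · intro x hx
      have hxn : x ≠ none := fun h => hx (Or.inl h)
      refine ⟨fun h => Option.noConfusion rfl (heq_of_eq h), fun h => hxn (Option.some_inj.1 h)⟩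
    · intro x hx
      have hxn : x ≠ none := fun h => hx (Or.inl h)
      obtain ⟨y, rfl⟩ := Option.ne_none_iff_exists'.1 hxn
      refine ⟨rfl, ?_⟩
      show (G.out y).map (some ∘ some) = Option.map some ((G.out y).map some)
      rw [Option.map_map]
  · -- isSimple
    constructor
    · rintro (_ | _ | z) y h
      · exact Option.noConfusion rfl (heq_of_eq h)
      · have : y = none := (Option.some_inj.1 h).symm
        subst this
        rfl
      · obtain ⟨y', hy', rfl⟩ := Option.map_eq_some_iff.1 h
        show (G.out y').map (some ∘ some) = none
        rw [hG.1 z y' hy']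
        rfl
    · rintro (_ | _ | z) h
      · refine ⟨some none, rfl, ?_⟩
        rintro (_ | _ | y) hy
        · exact Option.noConfusion rfl (heq_of_eq hy)
        · rfl
        · obtain ⟨y', -, hy'⟩ := Option.map_eq_some_iff.1 hy
          simp at hy'
      · exact absurd h (fun hh => Option.noConfusion rfl (heq_of_eq hh))
      · have hz : G.out z = none := Option.map_eq_none_iff.1 h
        obtain ⟨y, hy, hyu⟩ := hG.2 z hz
        refine ⟨some (some y), ?_, ?_⟩
        · show (G.out y).map (some ∘ some) = some (some (some z))
          rw [hy]; rfl
        · rintro (_ | _ | x) hx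
          · exact Option.noConfusion rfl (heq_of_eq hx)
          · exact absurd (Option.some_inj.1 hx) (fun hh => Option.noConfusion rfl (heq_of_eq hh))
          · obtain ⟨x', hx', hx''⟩ := Option.map_eq_some_iff.1 hx
            obtain rfl : x' = z := by
              have := Option.some_inj.1 hx''
              exact Option.some_inj.1 (Option.some_inj.1 hx'')
            rw [hyu x hx']
  · rw [cpg_revG, hob, hod, hE]
end

section
/- The relay rule Relay Reversal (applied twice) emulates the process rule Delegation: for every simple relay graph G_R and every application of Delegation to CPG(G_R) (process u with edges to distinct processes v and w replaces its edge to w by an edge from v to w) producing G_P', there is a simple relay graph G_R' with CPG(G_R') = G_P' obtainable from G_R using only Relay Reversal. -/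
section AuxDelegation

variable {P : Type}

/-- Survivor relays: those distinct from `rW` and `tW`. -/
abbrev NBD (G : RG P) (rW tW : G.R) : Type := {x : G.R // ¬(x = rW ∨ x = tW)}

open Classical in
/-- Map of old relays into the survivors (removed relays go to `none`). -/
noncomputable def F1D (G : RG P) (rW tW : G.R) : G.R → Option (NBD G rW tW) :=
  fun x => if h : x = rW ∨ x = tW then none else some ⟨x, h⟩

/-- First intermediate relay graph: delete `rW`, `tW`; fresh relay `none`
owned by the owner of `tW`, pointing at (the image of) `rv`. -/
noncomputable def G1D (G : RG P) (rW tW rv : G.R) : RG P where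
  R := Option (NBD G rW tW)
  fintR := @instFintypeOption _ (Fintype.ofFinite _)
  owner := fun z => z.elim (G.owner tW) fun a => G.owner a.1
  out := fun z => z.elim (some (F1D G rW tW rv)) fun a => Option.map (F1D G rW tW) (G.out a.1)

/-- Second relay graph: delete the fresh relay of `G1D`; fresh sink `some none`
owned by the owner of `tW`, and fresh relay `none` owned by the owner of `tv`
pointing at it. -/
noncomputable def G2D (G : RG P) (rW tW tv : G.R) : RG P where
  R := Option (Option (NBD G rW tW))
  fintR := @instFintypeOption _ (@instFintypeOption _ (Fintype.ofFinite _))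
  owner := fun z => match z with
    | none => G.owner tv
    | some none => G.owner tW
    | some (some a) => G.owner a.1
  out := fun z => match z with
    | none => some (some none)
    | some none => none
    | some (some a) => Option.map (fun y => some (F1D G rW tW y)) (G.out a.1)

end AuxDelegation

/-- Relay Reversal applied twice emulates the process rule
Delegation: for every simple relay graph `G` and every application of Delegation
to `CPG(G)` (pairwise distinct processes `u, v, w` with edges `(u,v)` and `(u,w)`;
the edge `(u,w)` is replaced by an edge `(v,w)`), a simple relay graph whose `CPG`
is the result is obtained from `G` by two applications of Relay Reversal. -/
theorem relayReversal_emulates_Delegation {P : Type} [DecidableEq P] (G : RG P)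
    (hG : isSimple G) (E' : Multiset (P × P))
    (hstep : ∃ u v w : P, u ≠ v ∧ u ≠ w ∧ v ≠ w ∧
      (u, v) ∈ cpg G ∧ (u, w) ∈ cpg G ∧
      E' = (v, w) ::ₘ (cpg G).erase (u, w)) :
    ∃ G1 G2 : RG P, relayReversal G G1 ∧ relayReversal G1 G2 ∧
      isSimple G2 ∧ cpg G2 = E' := by
  classical
  obtain ⟨u, v, w, huv, huw, hvw, hev, hew, hE⟩ := hstep
  simp only [cpg, Multiset.mem_filterMap] at hev hew
  obtain ⟨rv, -, hrv⟩ := hev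
  obtain ⟨rW, -, hrW⟩ := hew
  rw [Option.map_eq_some_iff] at hrv hrW
  obtain ⟨tv, hv1, hv2⟩ := hrv
  obtain ⟨tW, hw1, hw2⟩ := hrW
  rw [Prod.mk.injEq] at hv2 hw2
  obtain ⟨hov, hotv⟩ := hv2
  obtain ⟨how, hotw⟩ := hw2
  -- basic facts about the simple graph G
  have hsv : G.out tv = none := hG.1 rv tv hv1
  have hsw : G.out tW = none := hG.1 rW tW hw1
  have hne_rwtw : rW ≠ tW := by
    intro h; rw [h, hsw] at hw1; cases hw1
  have hrvnb : ¬(rv = rW ∨ rv = tW) := by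
    rintro (h | h)
    · rw [h, hw1] at hv1
      injection hv1 with h2
      exact hvw (by rw [← hotv, ← hotw, h2])
    · rw [h, hsw] at hv1; cases hv1
  have htvnb : ¬(tv = rW ∨ tv = tW) := by
    rintro (h | h)
    · rw [h] at hsv; rw [hsv] at hw1; cases hw1
    · exact hvw (by rw [← hotv, ← hotw, h])
  have hnoin : ∀ y, G.out y ≠ some rW := by
    intro y h
    have := hG.1 y rW h
    rw [this] at hw1; cases hw1
  have huniq : ∀ y, G.out y = some tW → y = rW := by
    intro y hy
    obtain ⟨r0, -, hu0⟩ := hG.2 tW hsw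
    rw [hu0 y hy, hu0 rW hw1]
  have key : ∀ a y, ¬(a = rW ∨ a = tW) → G.out a = some y → ¬(y = rW ∨ y = tW) := by
    rintro a y ha hy (h | h)
    · exact hnoin a (h ▸ hy)
    · exact ha (Or.inl (huniq a (h ▸ hy)))
  -- facts about (F1D G rW tW)
  have hF1some : ∀ x (h : ¬(x = rW ∨ x = tW)), (F1D G rW tW) x = some ⟨x, h⟩ := fun x h => dif_neg h
  have hF1eqnone : ∀ y, (F1D G rW tW) y = none → (y = rW ∨ y = tW) := by
    intro y h; by_contra hc; rw [hF1some y hc] at h; cases h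
  have hF1eqsome : ∀ (z : G.R) (c : NBD G rW tW), (F1D G rW tW) z = some c → z = c.1 := by
    intro z c h
    by_cases hzb : z = rW ∨ z = tW
    · rw [F1D, dif_pos hzb] at h; cases h
    · rw [hF1some z hzb] at h
      injection h with h
      exact congrArg Subtype.val h
  -- characterization of the removed sets
  have hrem1 : ∀ x, x ∈ revRemoved G rW tW ↔ (x = rW ∨ x = tW) := by
    intro x
    constructor
    · rintro (h | ⟨h, -⟩)
      exacts [Or.inl h, Or.inr h]
    · rintro (h | h)
      · exact Or.inl h
      · exact Or.inr ⟨h, fun y hy hc => hy (huniq y hc)⟩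
  have hstep2 : (G1D G rW tW rv).out ((F1D G rW tW) rv) = some ((F1D G rW tW) tv) := by
    rw [hF1some rv hrvnb]
    show Option.map (F1D G rW tW) (G.out rv) = _
    rw [hv1]; rfl
  have hsink2 : (G1D G rW tW rv).out ((F1D G rW tW) tv) = none := by
    rw [hF1some tv htvnb]
    show Option.map (F1D G rW tW) (G.out tv) = none
    rw [hsv]; rfl
  have hrem2 : ∀ z : (G1D G rW tW rv).R,
      z ∈ revRemoved (G1D G rW tW rv) none ((F1D G rW tW) tv) ↔ z = none := by
    intro z
    constructor
    · rintro (h | ⟨h, hall⟩)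
      · exact h
      · exfalso
        refine hall ((F1D G rW tW) rv) ?_ hstep2
        rw [hF1some rv hrvnb]
        exact fun h => by cases h
    · rintro rfl; exact Or.inl rfl
  refine ⟨G1D G rW tW rv, G2D G rW tW tv, ?_, ?_, ?_, ?_⟩
  · -- first reversal
    refine ⟨u, rW, tW, how, hnoin, ⟨Relation.ReflTransGen.single hw1, hsw⟩, Or.inl ?_⟩
    refine ⟨rv, none, (F1D G rW tW), fun h => hrvnb (Or.inl h), hov,
      fun h => hrvnb ((hrem1 rv).1 h), ?_, ?_, ?_, ?_, rfl, rfl⟩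
    · intro x y hx hy
      have hx' : ¬(x = rW ∨ x = tW) := fun h => hx ((hrem1 x).2 h)
      have hy' : ¬(y = rW ∨ y = tW) := fun h => hy ((hrem1 y).2 h)
      rw [hF1some x hx', hF1some y hy']
      constructor
      · exact fun h => congrArg Subtype.val (Option.some.inj h)
      · rintro rfl; rfl
    · rintro (_ | a)
      · exact Or.inl rfl
      · exact Or.inr ⟨a.1, fun h => a.2 ((hrem1 a.1).1 h), hF1some a.1 a.2⟩
    · intro x hx
      rw [hF1some x fun h => hx ((hrem1 x).2 h)]
      exact fun h => by cases h
    · intro x hx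
      rw [hF1some x fun h => hx ((hrem1 x).2 h)]
      exact ⟨rfl, rfl⟩
  · -- second reversal
    refine ⟨G.owner tW, none, (F1D G rW tW) tv, rfl, ?_, ?_, Or.inr
      ⟨some none, none, Option.some, Option.some_ne_none _, ?_, ?_, ?_, ?_, rfl, rfl, ?_, rfl⟩⟩
    · rintro (_ | a) h
      · injection h with h
        exact absurd (hF1eqnone rv h) hrvnb
      · obtain ⟨y, hy, hy2⟩ := Option.map_eq_some_iff.1 h
        exact absurd (hF1eqnone y hy2) (key a.1 y a.2 hy)
    · exact ⟨Relation.ReflTransGen.head rfl (Relation.ReflTransGen.single hstep2), hsink2⟩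
    · intro x y hx hy
      exact ⟨fun h => Option.some.inj h, fun h => h ▸ rfl⟩
    · rintro (_ | (_ | a))
      · exact Or.inr (Or.inl rfl)
      · exact Or.inl rfl
      · refine Or.inr (Or.inr ⟨some a, fun h => ?_, rfl⟩)
        cases (hrem2 (some a)).1 h
    · rintro (_ | a) hx
      · exact absurd ((hrem2 none).2 rfl) hx
      · exact ⟨(fun h => by cases h), Option.some_ne_none _⟩
    · rintro (_ | a) hx
      · exact absurd ((hrem2 none).2 rfl) hx
      · refine ⟨rfl, ?_⟩
        show Option.map (fun y => some ((F1D G rW tW) y)) (G.out a.1) =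
          Option.map Option.some (Option.map (F1D G rW tW) (G.out a.1))
        rw [Option.map_map]; rfl
    · simp only [hF1some tv htvnb]; rfl
  · -- simplicity of G2
    constructor
    · rintro (_ | (_ | ⟨a, ha⟩)) s hrs
      · injection hrs with h; rw [← h]; rfl
      · cases hrs
      · obtain ⟨y, hy, rfl⟩ := Option.map_eq_some_iff.1 hrs
        have hynb : ¬(y = rW ∨ y = tW) := key a y ha hy
        rw [hF1some y hynb]
        show Option.map (fun z => some ((F1D G rW tW) z)) (G.out y) = none
        rw [hG.1 a y hy]; rfl
    · rintro (_ | (_ | ⟨a, ha⟩)) hs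
      · cases hs
      · -- the fresh sink `some none`
        refine ⟨none, rfl, ?_⟩
        rintro (_ | (_ | ⟨b, hb⟩)) hy
        · rfl
        · cases hy
        · obtain ⟨z, hz, hz2⟩ := Option.map_eq_some_iff.1 hy
          exact absurd (hF1eqnone z (Option.some.inj hz2)) (key b z hb hz)
      · -- an old sink `some (some ⟨a, ha⟩)`
        have ha0 : G.out a = none := by
          rcases h : G.out a with _ | y
          · rfl
          · have hs' : Option.map (fun z => some ((F1D G rW tW) z)) (G.out a) = none := hs
            rw [h] at hs'; cases hs' 
        obtain ⟨rb, hrb, hub⟩ := hG.2 a ha0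
        have hrbnb : ¬(rb = rW ∨ rb = tW) := by
          rintro (h | h)
          · rw [h, hw1] at hrb
            exact ha (Or.inr (Option.some.inj hrb).symm)
          · rw [h, hsw] at hrb; cases hrb
        refine ⟨some (some ⟨rb, hrbnb⟩), ?_, ?_⟩
        · show Option.map (fun z => some ((F1D G rW tW) z)) (G.out rb) = _
          rw [hrb, Option.map_some, hF1some a ha]; rfl
        · rintro (_ | (_ | ⟨b, hb⟩)) hy
          · cases hy
          · cases hy
          · obtain ⟨z, hz, hz2⟩ := Option.map_eq_some_iff.1 hy
            have hz3 : (F1D G rW tW) z = some ⟨a, ha⟩ := Option.some.inj hz2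
            have hza : z = a := hF1eqsome z ⟨a, ha⟩ hz3
            rw [hza] at hz
            have : b = rb := hub b hz
            subst this
            rfl
  · -- cpg computation
    have hunivG : (Finset.univ : Finset G.R).val =
        rW ::ₘ tW ::ₘ (Finset.univ : Finset (NBD G rW tW)).val.map Subtype.val := by
      refine ((Finset.univ.nodup).ext ?_).2 ?_
      · refine Multiset.nodup_cons.2 ⟨?_, Multiset.nodup_cons.2 ⟨?_, ?_⟩⟩
        · intro h
          rcases Multiset.mem_cons.1 h with h | h
          · exact hne_rwtw h
          · obtain ⟨b, -, hb⟩ := Multiset.mem_map.1 h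
            exact b.2 (Or.inl hb)
        · intro h
          obtain ⟨b, -, hb⟩ := Multiset.mem_map.1 h
          exact b.2 (Or.inr hb)
        · exact (Finset.univ.nodup).map fun x y h => Subtype.ext h
      · intro x
        simp only [Finset.mem_val, Finset.mem_univ, true_iff, Multiset.mem_cons,
          Multiset.mem_map]
        by_cases h : x = rW ∨ x = tW
        · rcases h with h | h
          · exact Or.inl h
          · exact Or.inr (Or.inl h)
        · exact Or.inr (Or.inr ⟨⟨x, h⟩, trivial, rfl⟩)
    have hcpgG : cpg G = (u, w) ::ₘ (Finset.univ : Finset (NBD G rW tW)).val.filterMap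
        (fun a => (G.out a.1).map fun s => (G.owner a.1, G.owner s)) := by
      have hfrW : (fun r => (G.out r).map fun s => (G.owner r, G.owner s)) rW
          = some (u, w) := by
        show (G.out rW).map _ = _
        rw [hw1, Option.map_some, how, hotw]
      have hftW : (fun r => (G.out r).map fun s => (G.owner r, G.owner s)) tW
          = none := by
        show (G.out tW).map _ = _
        rw [hsw]; rfl
      show (Finset.univ : Finset G.R).val.filterMap
        (fun r => (G.out r).map fun s => (G.owner r, G.owner s)) = _
      rw [hunivG, Multiset.filterMap_cons_some
          (fun r => (G.out r).map fun s => (G.owner r, G.owner s)) rW _ hfrW,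
        Multiset.filterMap_cons_none tW _ hftW, Multiset.filterMap_map]
      rfl
    have hunivG2 : (Finset.univ : Finset (G2D G rW tW tv).R).val =
        none ::ₘ (some none) ::ₘ
          (Finset.univ : Finset (NBD G rW tW)).val.map (fun a => some (some a)) := by
      refine ((Finset.univ.nodup).ext ?_).2 ?_
      · refine Multiset.nodup_cons.2 ⟨?_, Multiset.nodup_cons.2 ⟨?_, ?_⟩⟩
        · intro h
          rcases Multiset.mem_cons.1 h with h | h
          · cases h
          · obtain ⟨b, -, hb⟩ := Multiset.mem_map.1 h
            cases hb
        · intro h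
          obtain ⟨b, -, hb⟩ := Multiset.mem_map.1 h
          cases hb
        · exact (Finset.univ.nodup).map fun x y h =>
            Option.some.inj (Option.some.inj h)
      · rintro (_ | (_ | a))
        · exact iff_of_true (Finset.mem_univ_val _) (Multiset.mem_cons_self _ _)
        · exact iff_of_true (Finset.mem_univ_val _)
            (Multiset.mem_cons_of_mem (Multiset.mem_cons_self _ _))
        · exact iff_of_true (Finset.mem_univ_val _) (Multiset.mem_cons_of_mem
            (Multiset.mem_cons_of_mem (Multiset.mem_map_of_mem _ (Finset.mem_univ_val a))))
    have hcpgG2 : cpg (G2D G rW tW tv) =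
        (v, w) ::ₘ (Finset.univ : Finset (NBD G rW tW)).val.filterMap
          (fun a => (G.out a.1).map fun s => (G.owner a.1, G.owner s)) := by
      have hfq' : (fun r => ((G2D G rW tW tv).out r).map
          fun s => ((G2D G rW tW tv).owner r, (G2D G rW tW tv).owner s)) none
          = some (v, w) := by
        show some (G.owner tv, G.owner tW) = some (v, w)
        rw [hotv, hotw]
      have hfq : (fun r => ((G2D G rW tW tv).out r).map
          fun s => ((G2D G rW tW tv).owner r, (G2D G rW tW tv).owner s)) (some none)
          = none := rfl
      show (Finset.univ : Finset (G2D G rW tW tv).R).val.filterMap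
        (fun r => ((G2D G rW tW tv).out r).map
          fun s => ((G2D G rW tW tv).owner r, (G2D G rW tW tv).owner s)) = _
      erw [hunivG2, Multiset.filterMap_cons_some
          (fun r => ((G2D G rW tW tv).out r).map
            fun s => ((G2D G rW tW tv).owner r, (G2D G rW tW tv).owner s)) none _ hfq',
        Multiset.filterMap_cons_none (some none) _ hfq, Multiset.filterMap_map]
      refine congrArg _ (congrArg (fun f => Multiset.filterMap f _) (funext fun a => ?_))
      show ((G2D G rW tW tv).out (some (some a))).map _ = (G.out a.1).map _
      rcases h : G.out a.1 with _ | y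
      · show (Option.map _ (G.out a.1)).map _ = _
        rw [h]; rfl
      · have hynb : ¬(y = rW ∨ y = tW) := key a.1 y a.2 h
        show (Option.map (fun z => some ((F1D G rW tW) z)) (G.out a.1)).map _ = _
        rw [h]
        simp only [Option.map_some]
        rw [hF1some y hynb]
        rfl
    rw [hcpgG2, hE, hcpgG, Multiset.erase_cons_head]
end

section
/- In a tree T rooted at a sink relay s, the broadcast-and-reverse procedure terminates and reconstructs T: processing levels L_T(0), L_T(1), ..., in ascending order, where at each level every process holding a relay r sends its received relay to the processes holding children of r and closes the relays used for sending, yields after |depth(T)| rounds a relay graph isomorphic to T. -/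
/-- The edges of the target tree `T`, read as process-graph edges from the owner of
the parent relay to the owner of the child relay. -/
def tEdges {P : Type} (GT : RG P) : Multiset (P × P) :=
  (Finset.univ : Finset GT.R).val.filterMap fun r =>
    (GT.out r).map fun p => (GT.owner p, GT.owner r)


section Aux

lemma count_filterMap' {α γ : Type*} [DecidableEq γ] (f : α → Option γ) (s : Multiset α) (c : γ) :
    Multiset.count c (s.filterMap f) = Multiset.card (s.filter fun a => f a = some c) := by
  classical
  induction s using Multiset.induction with
  | empty => simp
  | cons a s ih =>
    rw [Multiset.filter_cons]
    cases h : f a with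
    | none =>
      have hne : ¬ (f a = some c) := by simp [h]
      rw [Multiset.filterMap_cons_none a s h]
      simp [hne, ih]
    | some b =>
      rw [Multiset.filterMap_cons_some f a s h]
      by_cases hbc : b = c
      · have hfc : f a = some c := by rw [h, hbc]
        simp [hfc, ih, Multiset.count_cons, hbc]
      · have hne : ¬ (f a = some c) := by simp [h, hbc]
        have hcb : ¬ (c = b) := fun hh => hbc hh.symm
        simp [hne, ih, Multiset.count_cons, hcb, hbc]

lemma exists_bij_of_filterMap_eq {α β γ : Type*} [Fintype α] [Fintype β]
    (f : α → Option γ) (g : β → Option γ)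
    (h : Multiset.filterMap f (Finset.univ : Finset α).val
       = Multiset.filterMap g (Finset.univ : Finset β).val) :
    ∃ σ : {a // (f a).isSome} → {b // (g b).isSome},
      Function.Bijective σ ∧ ∀ a : {a // (f a).isSome}, g (σ a).1 = f a.1 := by
  classical
  have hcard : ∀ c : γ, Fintype.card {a : α // f a = some c} = Fintype.card {b : β // g b = some c} := by
    intro c
    have h1 := count_filterMap' f (Finset.univ : Finset α).val c
    have h2 := count_filterMap' g (Finset.univ : Finset β).val c
    rw [h] at h1
    rw [Fintype.card_subtype, Fintype.card_subtype]
    exact (h1.symm.trans h2)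
  have eqv : ∀ c : γ, {a : α // f a = some c} ≃ {b : β // g b = some c} :=
    fun c => Fintype.equivOfCardEq (hcard c)
  have H : ∀ a : {a : α // (f a).isSome}, ∃ b : {b : β // (g b).isSome},
      g b.1 = f a.1 ∧ ∀ (c : γ) (hc : f a.1 = some c), b.1 = ((eqv c) ⟨a.1, hc⟩).1 := by
    rintro ⟨a, ha⟩
    obtain ⟨c, hfa⟩ : ∃ c, f a = some c := Option.isSome_iff_exists.mp ha
    · refine ⟨⟨((eqv c) ⟨a, hfa⟩).1, by rw [((eqv c) ⟨a, hfa⟩).2]; rfl⟩, ?_, ?_⟩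
      · rw [((eqv c) ⟨a, hfa⟩).2, hfa]
      · intro c' hc'
        have : c = c' := by rw [hfa] at hc'; exact Option.some_inj.mp hc'
        subst this
        rfl
  choose σ hσ1 hσ2 using H
  refine ⟨σ, ⟨?_, ?_⟩, hσ1⟩
  · rintro a a' hee
    obtain ⟨c, hc⟩ : ∃ c, f a.1 = some c := Option.isSome_iff_exists.mp a.2
    obtain ⟨c', hc'⟩ : ∃ c, f a'.1 = some c := Option.isSome_iff_exists.mp a'.2
    have hcc : c = c' := by
      have e1 : g (σ a).1 = some c := (hσ1 a).trans hc
      have e2 : g (σ a').1 = some c' := (hσ1 a').trans hc'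
      rw [hee] at e1
      exact Option.some_inj.mp (e1.symm.trans e2)
    subst hcc
    have e3 : ((eqv c) ⟨a.1, hc⟩).1 = ((eqv c) ⟨a'.1, hc'⟩).1 := by
      rw [← hσ2 a c hc, ← hσ2 a' c hc', hee]
    have h4 := (eqv c).injective (Subtype.ext e3)
    have h5 := congrArg Subtype.val h4
    exact Subtype.ext h5
  · rintro b
    obtain ⟨c, hgb⟩ : ∃ c, g b.1 = some c := Option.isSome_iff_exists.mp b.2
    obtain ⟨a0, ha0⟩ := (eqv c).surjective ⟨b.1, hgb⟩
    have hfa : f a0.1 = some c := a0.2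
    refine ⟨⟨a0.1, by rw [hfa]; rfl⟩, Subtype.ext ?_⟩
    rw [hσ2 ⟨a0.1, by rw [hfa]; rfl⟩ c hfa]
    have : (⟨a0.1, hfa⟩ : {a : α // f a = some c}) = a0 := Subtype.ext rfl
    rw [this, ha0]

end Aux

section Stage
attribute [local instance] Classical.propDecidable

variable {P : Type} (GT : RG P) (s : GT.R)

/-- Owner of the parent of `x` (junk `GT.owner x` if `x` is the root). -/
noncomputable def pOwn (x : GT.R) : P := ((GT.out x).map GT.owner).getD (GT.owner x)

lemma pOwn_eq {x p : GT.R} (h : GT.out x = some p) : pOwn GT x = GT.owner p := by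
  simp [pOwn, h]

/-- Relays of the intermediate state: a copy of every tree relay already rebuilt
(in `D`), plus, for every tree relay not yet rebuilt, a direct/sink relay pair. -/
abbrev stR (D : Finset GT.R) : Type :=
  {x : GT.R // x ∈ D} ⊕ ({x : GT.R // x ∉ D ∧ x ≠ s} × Bool)

/-- The intermediate state graph. -/
noncomputable def stG (D : Finset GT.R) : RG P where
  R := stR GT s D
  fintR := inferInstance
  owner := fun z => match z with
    | .inl x => GT.owner x.1
    | .inr (x, false) => pOwn GT x.1
    | .inr (x, true) => GT.owner x.1
  out := fun z => match z with
    | .inl x => (GT.out x.1).bind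
        (fun p => if hp : p ∈ D then some (.inl ⟨p, hp⟩) else none)
    | .inr (x, false) => some (.inr (x, true))
    | .inr (x, true) => none

def rooted (D : Finset GT.R) : Prop := ∀ x ∈ D, ∀ p, GT.out x = some p → p ∈ D

variable {GT s}

lemma stG_no_incoming (D : Finset GT.R) (c : {x : GT.R // x ∉ D ∧ x ≠ s}) :
    ∀ z : (stG GT s D).R, (stG GT s D).out z ≠ some (Sum.inr (c, false)) := by
  rintro (x | ⟨x, _ | _⟩) h
  · simp only [stG] at h
    cases hx : GT.out x.1 with
    | none => rw [hx] at h; simp at h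
    | some p =>
      rw [hx] at h
      by_cases hp : p ∈ D
      · simp [hp] at h
      · simp [hp] at h
  · simp only [stG] at h
    have := Option.some_inj.mp h
    exact Bool.noConfusion (congrArg (fun z => match z with
      | Sum.inr (_, b) => b | Sum.inl _ => true) this)
  · simp only [stG] at h
    simp at h

lemma stG_rem (D : Finset GT.R) (c : {x : GT.R // x ∉ D ∧ x ≠ s}) (z : (stG GT s D).R) :
    z ∉ revRemoved (stG GT s D) (Sum.inr (c, false)) (Sum.inr (c, true)) ↔
      (z ≠ Sum.inr (c, false) ∧ z ≠ Sum.inr (c, true)) := by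
  have hcond : ∀ y : (stG GT s D).R, y ≠ Sum.inr (c, false) →
      (stG GT s D).out y ≠ some (Sum.inr (c, true)) := by
    rintro (x | ⟨x, _ | _⟩) hy h
    · simp only [stG] at h
      cases hx : GT.out x.1 with
      | none => rw [hx] at h; simp at h
      | some p =>
        rw [hx] at h
        by_cases hp : p ∈ D
        · simp [hp] at h
        · simp [hp] at h
    · simp only [stG] at h
      have h2 := Option.some_inj.mp h
      have h3 : x = c := by
        have := congrArg (fun z => match z with
          | Sum.inr (y, _) => y | Sum.inl _ => c) h2
        simpa using this
      exact hy (by rw [h3])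
    · simp only [stG] at h
      simp at h
  constructor
  · intro hz
    constructor
    · intro h; exact hz (Or.inl h)
    · intro h; exact hz (Or.inr ⟨h, hcond⟩)
  · rintro ⟨h1, h2⟩ (h | ⟨h, _⟩)
    · exact h1 h
    · exact h2 h


lemma stG_rem_cases (D : Finset GT.R) (c : {x : GT.R // x ∉ D ∧ x ≠ s}) {z : (stG GT s D).R}
    (hz : z ∉ revRemoved (stG GT s D) (Sum.inr (c, false)) (Sum.inr (c, true))) :
    (∃ x, z = Sum.inl x) ∨ ∃ x b, z = Sum.inr (x, b) ∧ x ≠ c := by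
  rw [stG_rem] at hz
  rcases z with x | ⟨x, b⟩
  · exact Or.inl ⟨x, rfl⟩
  · refine Or.inr ⟨x, b, rfl, ?_⟩
    rintro rfl
    cases b
    · exact hz.1 rfl
    · exact hz.2 rfl

variable (GT s) in
def pval {E : Finset GT.R} : stR GT s E → GT.R
  | .inl x => x.1
  | .inr (x, _) => x.1

variable (GT s) in
def pbool {E : Finset GT.R} : stR GT s E → Option Bool
  | .inl _ => none
  | .inr (_, b) => some b

lemma stG_out_inl_some (D : Finset GT.R) (x : GT.R) (hx : x ∈ D) {p : GT.R}
    (hp : GT.out x = some p) (hpD : p ∈ D) :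
    (stG GT s D).out (Sum.inl ⟨x, hx⟩) = some (Sum.inl ⟨p, hpD⟩) := by
  simp [stG, hp, hpD]

lemma stG_out_inl_none (D : Finset GT.R) (x : GT.R) (hx : x ∈ D)
    (h : GT.out x = none) : (stG GT s D).out (Sum.inl ⟨x, hx⟩) = none := by
  simp [stG, h]

/-- Inductive step: reversing the direct relay for tree node `c`. -/
lemma step_rev (D : Finset GT.R) (hr : rooted GT D)
    (c : GT.R) (hcD : c ∉ D) (hcs : c ≠ s) (p : GT.R) (hcp : GT.out c = some p)
    (hpD : p ∈ D) :
    relayReversal (stG GT s D) (stG GT s (insert c D)) := by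
  classical
  refine ⟨pOwn GT c, Sum.inr (⟨c, hcD, hcs⟩, false), Sum.inr (⟨c, hcD, hcs⟩, true), rfl,
    stG_no_incoming D _, ⟨Relation.ReflTransGen.single rfl, rfl⟩, ?_⟩
  left
  let F : (stG GT s D).R → (stG GT s (insert c D)).R := fun z =>
    match z with
    | .inl x => .inl ⟨x.1, Finset.mem_insert_of_mem x.2⟩
    | .inr (x, b) => if hx : x.1 = c then .inl ⟨c, Finset.mem_insert_self _ _⟩
        else .inr (⟨x.1, fun hm => ((Finset.mem_insert.mp hm).elim hx (fun hD => x.2.1 hD)),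
          x.2.2⟩, b)
  have hFinl : ∀ (x : {x : GT.R // x ∈ D}),
      F (Sum.inl x) = Sum.inl ⟨x.1, Finset.mem_insert_of_mem x.2⟩ := fun _ => rfl
  have hFinr : ∀ (x : {x : GT.R // x ∉ D ∧ x ≠ s}) (b : Bool) (hx : x.1 ≠ c),
      F (Sum.inr (x, b)) = Sum.inr (⟨x.1,
        fun hm => ((Finset.mem_insert.mp hm).elim hx (fun hD => x.2.1 hD)), x.2.2⟩, b) := by
    intro x b hx
    show dite _ _ _ = _
    exact dif_neg hx
  refine ⟨Sum.inl ⟨p, hpD⟩, Sum.inl ⟨c, Finset.mem_insert_self _ _⟩, F,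
    Sum.inl_ne_inr, (pOwn_eq GT hcp).symm, ?_, ?_, ?_, ?_, ?_, rfl, ?_⟩
  · exact (stG_rem _ _ _).mpr ⟨Sum.inl_ne_inr, Sum.inl_ne_inr⟩
  · -- injectivity on survivors
    intro x y hx hy
    constructor
    · intro h
      rcases stG_rem_cases D _ hx with ⟨a, rfl⟩ | ⟨a, ba, rfl, hac⟩ <;>
        rcases stG_rem_cases D _ hy with ⟨a', rfl⟩ | ⟨a', ba', rfl, ha'c⟩
      · rw [hFinl a, hFinl a'] at h
        have := congrArg (pval GT s) h
        exact congrArg Sum.inl (Subtype.ext this)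
      · rw [hFinl a, hFinr a' ba' (fun h' => ha'c (Subtype.ext h'))] at h
        exact absurd (congrArg (pbool GT s) h) (by simp [pbool])
      · rw [hFinr a ba (fun h' => hac (Subtype.ext h')), hFinl a'] at h
        exact absurd (congrArg (pbool GT s) h) (by simp [pbool])
      · rw [hFinr a ba (fun h' => hac (Subtype.ext h')),
          hFinr a' ba' (fun h' => ha'c (Subtype.ext h'))] at h
        have h1 := congrArg (pval GT s) h
        have h2 := congrArg (pbool GT s) h
        simp only [pval, pbool, Option.some_inj] at h1 h2
        rw [show a = a' from Subtype.ext h1, show ba = ba' from h2]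
    · intro h; rw [h]
  · -- surjectivity
    intro z
    rcases z with x | ⟨x, b⟩
    · by_cases hxc : x.1 = c
      · exact Or.inl (by rw [show x = ⟨c, Finset.mem_insert_self _ _⟩ from Subtype.ext hxc])
      · have hxD : x.1 ∈ D := (Finset.mem_insert.mp x.2).elim (fun h => absurd h hxc) id
        refine Or.inr ⟨Sum.inl ⟨x.1, hxD⟩, ?_, ?_⟩
        · exact (stG_rem _ _ _).mpr ⟨Sum.inl_ne_inr, Sum.inl_ne_inr⟩
        · rw [hFinl]
    · have hxc : x.1 ≠ c := fun h => x.2.1 (by rw [h]; exact Finset.mem_insert_self _ _)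
      have hxD : x.1 ∉ D := fun h => x.2.1 (Finset.mem_insert_of_mem h)
      refine Or.inr ⟨Sum.inr (⟨x.1, hxD, x.2.2⟩, b), ?_, ?_⟩
      · refine (stG_rem _ _ _).mpr ?_
        exact ⟨fun h => hxc (congrArg (pval GT s) h), fun h => hxc (congrArg (pval GT s) h)⟩
      · rw [hFinr _ b hxc]
  · -- F x ≠ s'
    intro z hz
    rcases stG_rem_cases D _ hz with ⟨a, rfl⟩ | ⟨a, ba, rfl, hac⟩
    · rw [hFinl a]
      intro h
      have hval : a.1 = c := congrArg (pval GT s) h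
      exact hcD (hval ▸ a.2)
    · rw [hFinr a ba (fun h' => hac (Subtype.ext h'))]
      intro h
      exact absurd (congrArg (pbool GT s) h) (by simp [pbool])
  · -- owner/out preservation
    intro z hz
    rcases stG_rem_cases D _ hz with ⟨a, rfl⟩ | ⟨a, ba, rfl, hac⟩
    · rw [hFinl a]
      refine ⟨rfl, ?_⟩
      cases hoa : GT.out a.1 with
      | none =>
        have e1 : (stG GT s (insert c D)).out (Sum.inl ⟨a.1, Finset.mem_insert_of_mem a.2⟩)
            = none := stG_out_inl_none _ _ _ hoa
        have e2 : (stG GT s D).out (Sum.inl a) = none := stG_out_inl_none _ a.1 a.2 hoa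
        rw [e1, e2]
        rfl
      | some p' =>
        have hp'D : p' ∈ D := hr a.1 a.2 p' hoa
        have e1 : (stG GT s (insert c D)).out (Sum.inl ⟨a.1, Finset.mem_insert_of_mem a.2⟩)
            = some (Sum.inl ⟨p', Finset.mem_insert_of_mem hp'D⟩) :=
          stG_out_inl_some _ _ _ hoa _
        have e2 : (stG GT s D).out (Sum.inl a) = some (Sum.inl ⟨p', hp'D⟩) :=
          stG_out_inl_some _ a.1 a.2 hoa hp'D
        rw [e1, e2]; exact (congrArg some (hFinl ⟨p', hp'D⟩)).symm
    · have hac' : a.1 ≠ c := fun h' => hac (Subtype.ext h')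
      rw [hFinr a ba hac']
      cases ba
      · refine ⟨rfl, ?_⟩
        show _ = Option.map F (some (Sum.inr (a, true)))
        exact (congrArg some (hFinr a true hac')).symm
      · exact ⟨rfl, rfl⟩
  · -- out s' = some (F s-witness)
    rw [stG_out_inl_some _ _ _ hcp (Finset.mem_insert_of_mem hpD)]; rfl

/-- Base step: the root process creates a fresh sink relay (copy of the root)
and sends it to the owner of a child `c` of the root. -/
lemma base_rev (hss : GT.out s = none) (c : GT.R) (hcs : GT.out c = some s) :
    relayReversal (stG GT s (∅ : Finset GT.R)) (stG GT s {s, c}) := by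
  classical
  have hcns : c ≠ s := fun h => by rw [h, hss] at hcs; simp at hcs
  have hsm : s ∈ ({s, c} : Finset GT.R) := Finset.mem_insert_self _ _
  have hcm : c ∈ ({s, c} : Finset GT.R) := Finset.mem_insert_of_mem (Finset.mem_singleton_self _)
  have hce : c ∉ (∅ : Finset GT.R) := Finset.notMem_empty _
  refine ⟨pOwn GT c, Sum.inr (⟨c, hce, hcns⟩, false), Sum.inr (⟨c, hce, hcns⟩, true), rfl,
    stG_no_incoming ∅ _, ⟨Relation.ReflTransGen.single rfl, rfl⟩, ?_⟩
  right
  let F : (stG GT s (∅ : Finset GT.R)).R → (stG GT s {s, c}).R := fun z =>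
    match z with
    | .inl x => .inl ⟨s, hsm⟩
    | .inr (x, b) => if hx : x.1 = c then .inl ⟨s, hsm⟩
        else .inr (⟨x.1, by
          intro hm
          rcases Finset.mem_insert.mp hm with h | h
          · exact x.2.2 h
          · exact hx (Finset.mem_singleton.mp h), x.2.2⟩, b)
  have hFinr : ∀ (x : {x : GT.R // x ∉ (∅ : Finset GT.R) ∧ x ≠ s}) (b : Bool) (hx : x.1 ≠ c),
      ∃ hmem, F (Sum.inr (x, b)) = Sum.inr (⟨x.1, hmem, x.2.2⟩, b) := by
    intro x b hx
    have hmem : x.1 ∉ ({s, c} : Finset GT.R) := by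
      intro hm
      rcases Finset.mem_insert.mp hm with h | h
      · exact x.2.2 h
      · exact hx (Finset.mem_singleton.mp h)
    refine ⟨hmem, ?_⟩
    show dite _ _ _ = _
    exact dif_neg hx
  refine ⟨Sum.inl ⟨s, hsm⟩, Sum.inl ⟨c, hcm⟩, F, ?_, ?_, ?_, ?_, ?_,
    (pOwn_eq GT hcs).symm, stG_out_inl_none _ _ _ hss, rfl, ?_⟩
  · intro h
    exact hcns ((congrArg (pval GT s) h).symm)
  · -- injectivity on survivors
    intro x y hx hy
    constructor
    · intro h
      rcases stG_rem_cases ∅ _ hx with ⟨a, rfl⟩ | ⟨a, ba, rfl, hac⟩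
      · exact absurd a.2 (Finset.notMem_empty _)
      rcases stG_rem_cases ∅ _ hy with ⟨a', rfl⟩ | ⟨a', ba', rfl, ha'c⟩
      · exact absurd a'.2 (Finset.notMem_empty _)
      obtain ⟨hm1, e1⟩ := hFinr a ba (fun h' => hac (Subtype.ext h'))
      obtain ⟨hm2, e2⟩ := hFinr a' ba' (fun h' => ha'c (Subtype.ext h'))
      rw [e1, e2] at h
      have h1 := congrArg (pval GT s) h
      have h2 := congrArg (pbool GT s) h
      simp only [pval, pbool, Option.some_inj] at h1 h2
      rw [show a = a' from Subtype.ext h1, show ba = ba' from h2]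
    · intro h; rw [h]
  · -- surjectivity
    intro z
    rcases z with x | ⟨x, b⟩
    · rcases Finset.mem_insert.mp x.2 with h | h
      · exact Or.inl (by rw [show x = ⟨s, hsm⟩ from Subtype.ext h])
      · exact Or.inr (Or.inl (by rw [show x = ⟨c, hcm⟩ from Subtype.ext (Finset.mem_singleton.mp h)]))
    · right; right
      have hxs : x.1 ≠ s := x.2.2
      have hxc : x.1 ≠ c := fun h =>
        x.2.1 (by rw [h]; exact hcm)
      refine ⟨Sum.inr (⟨x.1, Finset.notMem_empty _, hxs⟩, b), ?_, ?_⟩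
      · refine (stG_rem _ _ _).mpr ?_
        exact ⟨fun h => hxc (congrArg (pval GT s) h), fun h => hxc (congrArg (pval GT s) h)⟩
      · obtain ⟨hm, e⟩ := hFinr ⟨x.1, Finset.notMem_empty _, hxs⟩ b hxc
        rw [e]
  · -- F x ≠ q ∧ F x ≠ q'
    intro z hz
    rcases stG_rem_cases ∅ _ hz with ⟨a, rfl⟩ | ⟨a, ba, rfl, hac⟩
    · exact absurd a.2 (Finset.notMem_empty _)
    obtain ⟨hm, e⟩ := hFinr a ba (fun h' => hac (Subtype.ext h'))
    rw [e]
    constructor <;> · intro h; exact absurd (congrArg (pbool GT s) h) (by simp [pbool])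
  · -- owner/out preservation
    intro z hz
    rcases stG_rem_cases ∅ _ hz with ⟨a, rfl⟩ | ⟨a, ba, rfl, hac⟩
    · exact absurd a.2 (Finset.notMem_empty _)
    have hac' : a.1 ≠ c := fun h' => hac (Subtype.ext h')
    obtain ⟨hm, e⟩ := hFinr a ba hac'
    rw [e]
    cases ba
    · refine ⟨rfl, ?_⟩
      show _ = Option.map F (some (Sum.inr (a, true)))
      obtain ⟨hm2, e2⟩ := hFinr a true hac'
      exact (congrArg some e2).symm
    · exact ⟨rfl, rfl⟩
  · -- out q' = some q
    exact stG_out_inl_some _ _ _ hcs hsm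

lemma find_c (D : Finset GT.R) (hs : s ∈ D) (x : GT.R) (hx : x ∉ D)
    (hchain : Relation.ReflTransGen (fun a b => GT.out a = some b) x s) :
    ∃ c p, c ∉ D ∧ GT.out c = some p ∧ p ∈ D := by
  induction hchain using Relation.ReflTransGen.head_induction_on with
  | refl => exact absurd hs hx
  | head hab hbs ih =>
    rename_i a b
    by_cases hb : b ∈ D
    · exact ⟨a, b, hx, hab, hb⟩
    · exact ih hb

lemma chain_rev (hroot : ∀ r : GT.R, isSinkOf GT r s) :
    ∀ (n : ℕ) (D : Finset GT.R), rooted GT D → s ∈ D → (Finset.univ \ D).card ≤ n →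
      Relation.ReflTransGen relayReversal (stG GT s D) (stG GT s Finset.univ) := by
  intro n
  induction n with
  | zero =>
    intro D _ _ hcard
    have : Finset.univ \ D = ∅ := Finset.card_eq_zero.mp (Nat.le_zero.mp hcard)
    have hD : D = Finset.univ :=
      Finset.eq_univ_of_forall fun x => by
        by_contra hx
        exact (Finset.notMem_empty x) (this ▸ Finset.mem_sdiff.mpr ⟨Finset.mem_univ x, hx⟩)
    rw [hD]
  | succ n ih =>
    intro D hr hs hcard
    by_cases hD : D = Finset.univ
    · rw [hD]
    · obtain ⟨x, hx⟩ : ∃ x, x ∉ D := by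
        by_contra h
        push_neg at h
        exact hD (Finset.eq_univ_of_forall h)
      obtain ⟨c, p, hcD, hcp, hpD⟩ := find_c D hs x hx (hroot x).1
      have hcs : c ≠ s := fun h => hcD (h ▸ hs)
      have hr' : rooted GT (insert c D) := by
        intro y hy p' hp'
        rcases Finset.mem_insert.mp hy with h | h
        · subst h
          rw [hcp] at hp'
          exact Finset.mem_insert_of_mem (Option.some_inj.mp hp' ▸ hpD)
        · exact Finset.mem_insert_of_mem (hr y h p' hp')
      have hcard' : (Finset.univ \ insert c D).card ≤ n := by
        have hlt : (Finset.univ \ insert c D).card < (Finset.univ \ D).card := by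
          apply Finset.card_lt_card
          constructor
          · intro y hy
            rw [Finset.mem_sdiff] at hy ⊢
            exact ⟨hy.1, fun h => hy.2 (Finset.mem_insert_of_mem h)⟩
          · intro hsub
            have : c ∈ Finset.univ \ insert c D :=
              hsub (Finset.mem_sdiff.mpr ⟨Finset.mem_univ c, hcD⟩)
            exact (Finset.mem_sdiff.mp this).2 (Finset.mem_insert_self _ _)
        omega
      exact Relation.ReflTransGen.head
        (step_rev D hr c hcD hcs p hcp hpD)
        (ih (insert c D) hr' (Finset.mem_insert_of_mem hs) hcard')

lemma final_iso : rgIso (stG GT s (Finset.univ : Finset GT.R)) GT := by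
  classical
  refine ⟨⟨fun z => match z with
      | .inl x => x.1
      | .inr (x, _) => absurd (Finset.mem_univ x.1) x.2.1,
    fun x => Sum.inl ⟨x, Finset.mem_univ x⟩, ?_, ?_⟩, ?_⟩
  · rintro (x | ⟨x, b⟩)
    · rfl
    · exact absurd (Finset.mem_univ x.1) x.2.1
  · intro x
    rfl
  · rintro (x | ⟨x, b⟩)
    · refine ⟨rfl, ?_⟩
      show GT.out x.1 = Option.map _ ((stG GT s Finset.univ).out (Sum.inl x))
      cases hox : GT.out x.1 with
      | none =>
        have e : (stG GT s Finset.univ).out (Sum.inl x) = none :=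
          stG_out_inl_none _ x.1 x.2 hox
        rw [e]
        rfl
      | some p =>
        have e : (stG GT s Finset.univ).out (Sum.inl x) = some (Sum.inl ⟨p, Finset.mem_univ p⟩) :=
          stG_out_inl_some _ x.1 x.2 hox (Finset.mem_univ p)
        rw [e]
        rfl
    · exact absurd (Finset.mem_univ x.1) x.2.1

section Transport

variable {P : Type}

lemma rtg_out_transport {A B : RG P} (e : A.R ≃ B.R)
    (hout : ∀ x, B.out (e x) = Option.map e (A.out x)) :
    ∀ {b b' : B.R}, Relation.ReflTransGen (fun a b => B.out a = some b) b b' →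
      Relation.ReflTransGen (fun a b => A.out a = some b) (e.symm b) (e.symm b') := by
  intro b b' h
  induction h with
  | refl => exact Relation.ReflTransGen.refl
  | @tail m d h1 h2 ih =>
    refine Relation.ReflTransGen.tail ih ?_
    have hm : B.out (e (e.symm m)) = Option.map e (A.out (e.symm m)) := hout _
    rw [e.apply_symm_apply, h2] at hm
    cases ha : A.out (e.symm m) with
    | none => rw [ha] at hm; simp at hm
    | some z =>
      rw [ha] at hm
      have hz : d = e z := Option.some_inj.mp hm
      have hz2 : z = e.symm d := by rw [hz, e.symm_apply_apply]
      exact congrArg some hz2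

lemma out_iff_transport {A B : RG P} (e : A.R ≃ B.R)
    (hout : ∀ x, B.out (e x) = Option.map e (A.out x)) (x y : A.R) :
    A.out x = some y ↔ B.out (e x) = some (e y) := by
  constructor
  · intro h
    rw [hout x, h]
    rfl
  · intro h
    rw [hout x] at h
    cases ha : A.out x with
    | none => rw [ha] at h; simp at h
    | some z =>
      rw [ha] at h
      have : e z = e y := Option.some_inj.mp h
      rw [e.injective this]

lemma rgIso_relayReversal {A B C : RG P} (hAB : rgIso A B) (h : relayReversal B C) :
    relayReversal A C := by
  obtain ⟨e, he⟩ := hAB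
  have hown : ∀ x, B.owner (e x) = A.owner x := fun x => (he x).1
  have hout : ∀ x, B.out (e x) = Option.map (fun y => e y) (A.out x) := fun x => (he x).2
  obtain ⟨u, r, t, hru, hnoinc, ⟨hrt, htnone⟩, hcase⟩ := h
  have hianyx : ∀ x : A.R, e ((e.symm ∘ e) x) = e x := fun x => by simp
  have her : e (e.symm r) = r := e.apply_symm_apply r
  have het : e (e.symm t) = t := e.apply_symm_apply t
  have houtA : ∀ x y : A.R, A.out x = some y ↔ B.out (e x) = some (e y) :=
    out_iff_transport e hout
  have hremiff : ∀ x : A.R,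
      x ∈ revRemoved A (e.symm r) (e.symm t) ↔ e x ∈ revRemoved B r t := by
    intro x
    have h1 : x = e.symm r ↔ e x = r := Equiv.eq_symm_apply e
    have h2 : x = e.symm t ↔ e x = t := Equiv.eq_symm_apply e
    have h3 : (∀ y, y ≠ e.symm r → A.out y ≠ some (e.symm t)) ↔
        (∀ y, y ≠ r → B.out y ≠ some t) := by
      constructor
      · intro hA y hyr hy
        refine hA (e.symm y) (fun hh => hyr ?_) ?_
        · rw [← e.apply_symm_apply y, hh, her]
        · rw [houtA, e.apply_symm_apply, het]
          exact hy
      · intro hB y hyr hy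
        refine hB (e y) (fun hh => hyr ((Equiv.eq_symm_apply e).mpr hh)) ?_
        rw [houtA, het] at hy
        exact hy
    constructor
    · rintro (h | ⟨h, hc⟩)
      · exact Or.inl (h1.mp h)
      · exact Or.inr ⟨h2.mp h, h3.mp hc⟩
    · rintro (h | ⟨h, hc⟩)
      · exact Or.inl (h1.mpr h)
      · exact Or.inr ⟨h2.mpr h, h3.mpr hc⟩
  refine ⟨u, e.symm r, e.symm t, by rw [← hown, her, hru], ?_, ⟨?_, ?_⟩, ?_⟩
  · intro x hx
    exact hnoinc (e x) (by rw [(houtA x (e.symm r)).mp hx, her])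
  · exact rtg_out_transport e hout hrt
  · have := hout (e.symm t)
    rw [het, htnone] at this
    exact (Option.map_eq_none_iff).mp this.symm
  have hnotrem : ∀ x : A.R,
      x ∉ revRemoved A (e.symm r) (e.symm t) ↔ e x ∉ revRemoved B r t :=
    fun x => not_congr (hremiff x)
  have hback : ∀ y : B.R, y ∉ revRemoved B r t →
      e.symm y ∉ revRemoved A (e.symm r) (e.symm t) := by
    intro y hy
    rw [hnotrem, e.apply_symm_apply]
    exact hy
  rcases hcase with ⟨sB, s', F, hsr, hsu, hsrem, hinj, hsurj, hns', hpres, hos', hes'⟩ |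
      ⟨q, q', F, hqq, hinj, hsurj, hnq, hpres, hoq, heq, hoq', heq'⟩
  · left
    refine ⟨e.symm sB, s', F ∘ e, fun hh => hsr (e.symm.injective hh),
      by rw [← hown, e.apply_symm_apply]; exact hsu, hback sB hsrem, ?_, ?_, ?_, ?_, ?_, ?_⟩
    · intro x y hx hy
      rw [Function.comp_apply, Function.comp_apply,
        hinj (e x) (e y) ((hnotrem x).mp hx) ((hnotrem y).mp hy)]
      exact ⟨fun hh => e.injective hh, fun hh => by rw [hh]⟩
    · intro z
      rcases hsurj z with h | ⟨x, hx, hFx⟩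
      · exact Or.inl h
      · refine Or.inr ⟨e.symm x, hback x hx, ?_⟩
        rw [Function.comp_apply, e.apply_symm_apply, hFx]
    · intro x hx
      exact hns' (e x) ((hnotrem x).mp hx)
    · intro x hx
      obtain ⟨ho1, ho2⟩ := hpres (e x) ((hnotrem x).mp hx)
      refine ⟨by rw [Function.comp_apply, ho1, hown], ?_⟩
      rw [Function.comp_apply, ho2, hout x, Option.map_map]
    · rw [hos', ← hown (e.symm t), het]
    · rw [hes', Function.comp_apply, e.apply_symm_apply]
  · right
    refine ⟨q, q', F ∘ e, hqq, ?_, ?_, ?_, ?_, hoq, heq, ?_, heq'⟩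
    · intro x y hx hy
      rw [Function.comp_apply, Function.comp_apply,
        hinj (e x) (e y) ((hnotrem x).mp hx) ((hnotrem y).mp hy)]
      exact ⟨fun hh => e.injective hh, fun hh => by rw [hh]⟩
    · intro z
      rcases hsurj z with h | h | ⟨x, hx, hFx⟩
      · exact Or.inl h
      · exact Or.inr (Or.inl h)
      · refine Or.inr (Or.inr ⟨e.symm x, hback x hx, ?_⟩)
        rw [Function.comp_apply, e.apply_symm_apply, hFx]
    · intro x hx
      exact hnq (e x) ((hnotrem x).mp hx)
    · intro x hx
      obtain ⟨ho1, ho2⟩ := hpres (e x) ((hnotrem x).mp hx)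
      refine ⟨by rw [Function.comp_apply, ho1, hown], ?_⟩
      rw [Function.comp_apply, ho2, hout x, Option.map_map]
    · rw [hoq', ← hown (e.symm t), het]

end Transport

section Main

attribute [local instance] Classical.propDecidable

variable {P : Type}

lemma g2_iso (GT : RG P) (s : GT.R) (hroot : ∀ r : GT.R, isSinkOf GT r s)
    (G2 : RG P) (hG2 : isSimple G2) (hcpg : cpg G2 = tEdges GT) :
    rgIso G2 (stG GT s (∅ : Finset GT.R)) := by
  classical
  have hss : GT.out s = none := (hroot s).2
  have hsome : ∀ x : GT.R, x ≠ s → (GT.out x).isSome := by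
    intro x hx
    rcases Relation.ReflTransGen.cases_head (hroot x).1 with h | ⟨b, hb, _⟩
    · exact absurd h hx
    · rw [hb]; rfl
  set f : G2.R → Option (P × P) :=
    (fun r => (G2.out r).map fun s' => (G2.owner r, G2.owner s')) with hfdef
  set g : GT.R → Option (P × P) :=
    (fun x => (GT.out x).map fun p => (GT.owner p, GT.owner x)) with hgdef
  have hfm : Multiset.filterMap f (Finset.univ : Finset G2.R).val
      = Multiset.filterMap g (Finset.univ : Finset GT.R).val := hcpg
  obtain ⟨σ, hbij, hcomp⟩ := exists_bij_of_filterMap_eq f g hfm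
  have hconv : ∀ a : {a : G2.R // (G2.out a).isSome}, (f a.1).isSome := by
    intro a
    rw [hfdef]
    simpa using a.2
  have hconv' : ∀ a : {a : G2.R // (f a).isSome}, (G2.out a.1).isSome := by
    intro a
    have := a.2
    simp only [hfdef] at this
    simpa using this
  have hgsome : ∀ a : {a : G2.R // (f a).isSome}, (GT.out (σ a).1).isSome := by
    intro a
    have := (σ a).2
    simp only [hgdef] at this
    simpa using this
  have hD : ∀ a : {a : G2.R // (G2.out a).isSome},
      ∃ x : {x : GT.R // x ∉ (∅ : Finset GT.R) ∧ x ≠ s}, x.1 = (σ ⟨a.1, hconv a⟩).1 := by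
    intro a
    refine ⟨⟨(σ ⟨a.1, hconv a⟩).1, Finset.notMem_empty _, ?_⟩, rfl⟩
    intro hxs
    have := hgsome ⟨a.1, hconv a⟩
    rw [hxs, hss] at this
    exact Bool.noConfusion this
  choose dval hdval using hD
  have hgd : ∀ a : {a : G2.R // (G2.out a).isSome}, g (dval a).1 = f a.1 := by
    intro a
    rw [hdval a]
    exact hcomp ⟨a.1, hconv a⟩
  have hdinj : ∀ a a' : {a : G2.R // (G2.out a).isSome}, dval a = dval a' → a = a' := by
    intro a a' h
    have h1 : (σ ⟨a.1, hconv a⟩).1 = (σ ⟨a'.1, hconv a'⟩).1 := by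
      rw [← hdval a, ← hdval a', h]
    have h2 := hbij.1 (Subtype.ext h1)
    have h3 := congrArg Subtype.val h2
    exact Subtype.ext h3
  have hdsurj : ∀ x : {x : GT.R // x ∉ (∅ : Finset GT.R) ∧ x ≠ s},
      ∃ a : {a : G2.R // (G2.out a).isSome}, dval a = x := by
    intro x
    have hgx : (g x.1).isSome := by
      rw [hgdef]
      simpa using hsome x.1 x.2.2
    obtain ⟨a', ha'⟩ := hbij.2 ⟨x.1, hgx⟩
    refine ⟨⟨a'.1, hconv' a'⟩, Subtype.ext ?_⟩
    rw [hdval]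
    have : (⟨(⟨a'.1, hconv' a'⟩ : {a : G2.R // (G2.out a).isSome}).1,
        hconv ⟨a'.1, hconv' a'⟩⟩ : {a : G2.R // (f a).isSome}) = a' := Subtype.ext rfl
    rw [this, ha']
  -- the unique incoming relay of each sink of G2
  have hU : ∀ y : {y : G2.R // G2.out y = none}, ∃ r : G2.R,
      G2.out r = some y.1 ∧ ∀ z, G2.out z = some y.1 → z = r := by
    intro y
    obtain ⟨r, hr, hu⟩ := hG2.2 y.1 y.2
    exact ⟨r, hr, fun z hz => hu z hz⟩
  choose inc hinc1 hinc2 using hU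
  have hincSome : ∀ y : {y : G2.R // G2.out y = none}, (G2.out (inc y)).isSome := by
    intro y
    rw [hinc1 y]
    rfl
  -- the isomorphism
  have HE : ∀ y : G2.R, ∃ z : (stG GT s (∅ : Finset GT.R)).R,
      (∀ hy : (G2.out y).isSome, z = Sum.inr (dval ⟨y, hy⟩, false)) ∧
      (∀ hy : G2.out y = none, z = Sum.inr (dval ⟨inc ⟨y, hy⟩, hincSome ⟨y, hy⟩⟩, true)) := by
    intro y
    by_cases hy : (G2.out y).isSome
    · refine ⟨Sum.inr (dval ⟨y, hy⟩, false), fun _ => rfl, ?_⟩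
      intro hy0
      rw [hy0] at hy
      exact absurd hy (by simp)
    · have hn : G2.out y = none := Option.not_isSome_iff_eq_none.mp hy
      refine ⟨Sum.inr (dval ⟨inc ⟨y, hn⟩, hincSome ⟨y, hn⟩⟩, true), ?_, fun _ => rfl⟩
      intro hy'
      rw [hn] at hy'
      exact absurd hy' (by simp)
  choose E hE1 hE2 using HE
  have hEinj : Function.Injective E := by
    intro y y' h
    cases hy : G2.out y with
    | some b =>
      have hys : (G2.out y).isSome := by rw [hy]; rfl
      cases hy' : G2.out y' with
      | some b' =>
        have hys' : (G2.out y').isSome := by rw [hy']; rfl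
        rw [hE1 y hys, hE1 y' hys'] at h
        have h1 := congrArg (pval GT s) h
        have h2 : dval ⟨y, hys⟩ = dval ⟨y', hys'⟩ := Subtype.ext h1
        exact congrArg Subtype.val (hdinj _ _ h2)
      | none =>
        rw [hE1 y hys, hE2 y' hy'] at h
        have := congrArg (fun z : (stG GT s (∅ : Finset GT.R)).R => match z with
          | Sum.inr (_, b) => b | Sum.inl _ => true) h
        exact Bool.noConfusion this
    | none =>
      cases hy' : G2.out y' with
      | some b' =>
        have hys' : (G2.out y').isSome := by rw [hy']; rfl
        rw [hE2 y hy, hE1 y' hys'] at h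
        have := congrArg (fun z : (stG GT s (∅ : Finset GT.R)).R => match z with
          | Sum.inr (_, b) => b | Sum.inl _ => true) h
        exact Bool.noConfusion this
      | none =>
        rw [hE2 y hy, hE2 y' hy'] at h
        have h1 := congrArg (pval GT s) h
        have h2 := hdinj _ _ (Subtype.ext h1)
        have h3 : inc ⟨y, hy⟩ = inc ⟨y', hy'⟩ := congrArg Subtype.val h2
        have h4 := hinc1 ⟨y, hy⟩
        rw [h3, hinc1 ⟨y', hy'⟩] at h4
        exact (Option.some_inj.mp h4).symm
  have hEsurj : Function.Surjective E := by
    rintro (x | ⟨x, b⟩)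
    · exact absurd x.2 (Finset.notMem_empty _)
    obtain ⟨a, ha⟩ := hdsurj x
    cases b
    · refine ⟨a.1, ?_⟩
      rw [hE1 a.1 a.2]
      rw [show (⟨a.1, a.2⟩ : {a : G2.R // (G2.out a).isSome}) = a from Subtype.ext rfl, ha]
    · -- the sink of the direct relay a
      obtain ⟨b', hb'⟩ := Option.isSome_iff_exists.mp a.2
      have hbsink : G2.out b' = none := hG2.1 a.1 b' hb'
      refine ⟨b', ?_⟩
      rw [hE2 b' hbsink]
      have : inc ⟨b', hbsink⟩ = a.1 := (hinc2 ⟨b', hbsink⟩ a.1 hb').symm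
      have h5 : (⟨inc ⟨b', hbsink⟩, hincSome ⟨b', hbsink⟩⟩ : {a : G2.R // (G2.out a).isSome})
          = a := Subtype.ext this
      rw [h5, ha]
  -- owner and out compatibility
  have hown : ∀ y : G2.R, (stG GT s (∅ : Finset GT.R)).owner (E y) = G2.owner y := by
    intro y
    cases hy : G2.out y with
    | some b =>
      have hys : (G2.out y).isSome := by rw [hy]; rfl
      rw [hE1 y hys]
      -- owner of (dval ⟨y,hys⟩, false) is pOwn of its value
      obtain ⟨p, hp⟩ := Option.isSome_iff_exists.mp (hsome (dval ⟨y, hys⟩).1 (dval ⟨y, hys⟩).2.2)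
      have hgf := hgd ⟨y, hys⟩
      rw [hgdef, hfdef] at hgf
      simp only [hp, hy, Option.map_some] at hgf
      have hfst := congrArg Prod.fst (Option.some_inj.mp hgf)
      show pOwn GT (dval ⟨y, hys⟩).1 = G2.owner y
      rw [pOwn_eq GT hp]
      exact hfst
    | none =>
      rw [hE2 y hy]
      set a : {a : G2.R // (G2.out a).isSome} := ⟨inc ⟨y, hy⟩, hincSome ⟨y, hy⟩⟩ with hadef
      obtain ⟨p, hp⟩ := Option.isSome_iff_exists.mp (hsome (dval a).1 (dval a).2.2)
      have hgf := hgd a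
      rw [hgdef, hfdef] at hgf
      have hay : G2.out a.1 = some y := hinc1 ⟨y, hy⟩
      simp only [hp, hay, Option.map_some] at hgf
      have hsnd := congrArg Prod.snd (Option.some_inj.mp hgf)
      exact hsnd
  have hout : ∀ y : G2.R,
      (stG GT s (∅ : Finset GT.R)).out (E y) = Option.map E (G2.out y) := by
    intro y
    cases hy : G2.out y with
    | some b =>
      have hys : (G2.out y).isSome := by rw [hy]; rfl
      rw [hE1 y hys, Option.map_some]
      have hbsink : G2.out b = none := hG2.1 y b hy
      rw [hE2 b hbsink]
      have hib : inc ⟨b, hbsink⟩ = y := (hinc2 ⟨b, hbsink⟩ y hy).symm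
      have h5 : (⟨inc ⟨b, hbsink⟩, hincSome ⟨b, hbsink⟩⟩ : {a : G2.R // (G2.out a).isSome})
          = ⟨y, hys⟩ := Subtype.ext hib
      rw [h5]
      rfl
    | none =>
      rw [hE2 y hy]
      rfl
  exact ⟨Equiv.ofBijective E ⟨hEinj, hEsurj⟩, fun y => ⟨hown y, hout y⟩⟩

end Main

/-- Broadcast-and-reverse reconstructs a tree `T`: let `GT` be a
valid relay graph forming a tree in which every relay reaches the common sink
relay `s` (the root; `T` has at least one non-root relay), and let `G2` be a
simple relay graph in which, for every tree edge, the owner of the parent has a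
direct relay to the owner of the child. Then by a finite sequence of Relay
Reversals (processing the levels of `T` in ascending order) `G2` is transformed
into a relay graph isomorphic to `GT`. -/
theorem broadcast_and_reverse_reconstructs_tree {P : Type} (GT G2 : RG P)
    (lvl : GT.R → ℕ) (hlvl : ∀ r p : GT.R, GT.out r = some p → lvl r = lvl p + 1)
    (s : GT.R) (hroot : ∀ r : GT.R, isSinkOf GT r s)
    (hne : ∃ r : GT.R, r ≠ s)
    (hG2 : isSimple G2) (hcpg : cpg G2 = tEdges GT) :
    ∃ G' : RG P, Relation.ReflTransGen relayReversal G2 G' ∧ rgIso G' GT := by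
  classical
  have hss : GT.out s = none := (hroot s).2
  -- a child of the root
  obtain ⟨x0, hx0⟩ := hne
  obtain ⟨c, -, hc⟩ : ∃ c, Relation.ReflTransGen (fun a b => GT.out a = some b) x0 c ∧
      GT.out c = some s := by
    rcases Relation.ReflTransGen.cases_tail (hroot x0).1 with h | ⟨c, h1, h2⟩
    · exact absurd h.symm hx0
    · exact ⟨c, h1, h2⟩
  have hcs : c ≠ s := fun h => by rw [h, hss] at hc; simp at hc
  -- first reversal, transported through the isomorphism G2 ≅ stG GT s ∅
  have iso0 : rgIso G2 (stG GT s (∅ : Finset GT.R)) := g2_iso GT s hroot G2 hG2 hcpg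
  have rev1 : relayReversal (stG GT s (∅ : Finset GT.R)) (stG GT s {s, c}) :=
    base_rev hss c hc
  have rev1' : relayReversal G2 (stG GT s {s, c}) := rgIso_relayReversal iso0 rev1
  -- the remaining reversals
  have hr2 : rooted GT {s, c} := by
    intro y hy p hp
    rcases Finset.mem_insert.mp hy with h | h
    · rw [h, hss] at hp
      simp at hp
    · rw [Finset.mem_singleton.mp h, hc] at hp
      rw [← Option.some_inj.mp hp]
      exact Finset.mem_insert_self _ _
  have hchain : Relation.ReflTransGen relayReversal (stG GT s {s, c})
      (stG GT s Finset.univ) :=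
    chain_rev hroot _ {s, c} hr2 (Finset.mem_insert_self _ _) le_rfl
  exact ⟨stG GT s Finset.univ, Relation.ReflTransGen.head rev1' hchain, final_iso⟩
end Stage
end

section
/- In the process-graph model, the four rules Introduction, Delegation, Fusion, and Reversal each preserve weak connectivity of a finite directed multigraph. -/
/-- Weak connectivity of a directed multigraph given by a multiset of edges. -/
def wcM {V : Type*} (E : Multiset (V × V)) : Prop :=
  ∀ a b : V, Relation.ReflTransGen (fun x y => (x, y) ∈ E ∨ (y, x) ∈ E) a b

lemma wcM_of_closure {V : Type*} {E E' : Multiset (V × V)}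
    (h : ∀ x y : V, (x, y) ∈ E →
      Relation.ReflTransGen (fun x y => (x, y) ∈ E' ∨ (y, x) ∈ E') x y)
    (hw : wcM E) : wcM E' := by
  have hsymm : Symmetric (fun x y : V => (x, y) ∈ E' ∨ (y, x) ∈ E') :=
    fun x y hxy => hxy.symm
  intro a b
  have hab := hw a b
  induction hab with
  | refl => exact .refl
  | tail _ hstep ih =>
      refine ih.trans ?_
      rcases hstep with h1 | h1
      · exact h _ _ h1
      · exact (@Relation.ReflTransGen.stdSymm _ (fun x y : V => (x, y) ∈ E' ∨ (y, x) ∈ E') ⟨hsymm⟩).symm _ _ (h _ _ h1)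

/-- In the process-graph model, the four rules Introduction,
Delegation, Fusion and Reversal each preserve weak connectivity of a finite
directed multigraph. -/
theorem process_rules_preserve_weak_connectivity
    {V : Type*} [Fintype V] [DecidableEq V] :
    -- Introduction
    (∀ (E : Multiset (V × V)) (u v w : V), (u, v) ∈ E → (u, w) ∈ E → v ≠ w →
      wcM E → wcM ((v, w) ::ₘ E)) ∧
    -- Delegation
    (∀ (E : Multiset (V × V)) (u v w : V), u ≠ v → u ≠ w → v ≠ w →
      (u, v) ∈ E → (u, w) ∈ E → wcM E → wcM ((v, w) ::ₘ E.erase (u, w))) ∧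
    -- Fusion
    (∀ (E : Multiset (V × V)) (u v : V), 2 ≤ E.count (u, v) →
      wcM E → wcM (E.erase (u, v))) ∧
    -- Reversal
    (∀ (E : Multiset (V × V)) (u v : V), (u, v) ∈ E →
      wcM E → wcM ((v, u) ::ₘ E.erase (u, v))) := by
  refine ⟨?_, ?_, ?_, ?_⟩
  · -- Introduction
    intro E u v w _ _ _ hw
    refine wcM_of_closure (fun x y hxy => ?_) hw
    exact Relation.ReflTransGen.single (Or.inl (Multiset.mem_cons_of_mem hxy))
  · -- Delegation
    intro E u v w huv huw hvw huvE huwE hw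
    refine wcM_of_closure (fun x y hxy => ?_) hw
    by_cases hcase : (x, y) = (u, w)
    · obtain ⟨hx, hy⟩ : x = u ∧ y = w := by simpa using hcase
      rw [hx, hy]
      have h1 : (u, v) ∈ (v, w) ::ₘ E.erase (u, w) := by
        refine Multiset.mem_cons_of_mem ?_
        exact Multiset.mem_erase_of_ne (by simpa using hvw) |>.mpr huvE
      have h2 : (v, w) ∈ (v, w) ::ₘ E.erase (u, w) := Multiset.mem_cons_self _ _
      refine Relation.ReflTransGen.tail (b := v) (Relation.ReflTransGen.single ?_) ?_
      · exact Or.inl h1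
      · exact Or.inl h2
    · refine Relation.ReflTransGen.single (Or.inl ?_)
      exact Multiset.mem_cons_of_mem ((Multiset.mem_erase_of_ne hcase).mpr hxy)
  · -- Fusion
    intro E u v hcount hw
    refine wcM_of_closure (fun x y hxy => ?_) hw
    by_cases hcase : (x, y) = (u, v)
    · obtain ⟨hx, hy⟩ : x = u ∧ y = v := by simpa using hcase
      rw [hx, hy]
      refine Relation.ReflTransGen.single (Or.inl ?_)
      rw [← Multiset.count_pos, Multiset.count_erase_self]
      omega
    · exact Relation.ReflTransGen.single
        (Or.inl ((Multiset.mem_erase_of_ne hcase).mpr hxy))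
  · -- Reversal
    intro E u v huvE hw
    refine wcM_of_closure (fun x y hxy => ?_) hw
    by_cases hcase : (x, y) = (u, v)
    · obtain ⟨hx, hy⟩ : x = u ∧ y = v := by simpa using hcase
      rw [hx, hy]
      exact Relation.ReflTransGen.single (Or.inr (Multiset.mem_cons_self _ _))
    · exact Relation.ReflTransGen.single
        (Or.inl (Multiset.mem_cons_of_mem ((Multiset.mem_erase_of_ne hcase).mpr hxy)))
end
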